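/- arXiv:1709.03231 — 3 statements merged into one kernel-verified Lean document; each statement's English description precedes it below -/
import Mathlib

section
/- For every nonempty nested set N of the cycle graph C_m, there exists a positive integer d that divides both the cardinality |N| and the number of connected components of the subgraph of C_m induced on the union ⋃_{I ∈ N} I, such that the stabilizer (D_m)_N is either cyclic of order d (generated by a rotation) or isomorphic to the dihedral group of order 2d. -/
open Pointwise

def cycleGraph (m : ℕ) : SimpleGraph (ZMod m) where
  Adj i j := i ≠ j ∧ (j = i + 1 ∨ i = j + 1)
  symm := ⟨fun i j h => ⟨h.1.symm, h.2.symm⟩⟩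
  loopless := ⟨fun i h => h.1 rfl⟩

def IsConnSubset (m : ℕ) (I : Set (ZMod m)) : Prop :=
  ((cycleGraph m).induce I).Connected

def IsNested (m : ℕ) (N : Set (Set (ZMod m))) : Prop :=
  N.Finite ∧
  (∀ I ∈ N, I.Nonempty ∧ I ≠ Set.univ ∧ IsConnSubset m I) ∧
  (∀ I ∈ N, ∀ J ∈ N, I ⊆ J ∨ J ⊆ I ∨ I ∩ J = ∅) ∧
  (∀ S : Finset (Set (ZMod m)), ↑S ⊆ N → 2 ≤ S.card →
    ((S : Set (Set (ZMod m))).Pairwise fun I J => I ∩ J = ∅) →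
    ¬ IsConnSubset m (⋃ I ∈ S, I))

def rot (m : ℕ) : Equiv.Perm (ZMod m) := Equiv.addRight 1

def cycRefl (m : ℕ) : Equiv.Perm (ZMod m) := Equiv.neg (ZMod m)

def dihedral (m : ℕ) : Subgroup (Equiv.Perm (ZMod m)) :=
  Subgroup.closure {rot m, cycRefl m}

def IsReflection (m : ℕ) (φ : Equiv.Perm (ZMod m)) : Prop :=
  φ ∈ dihedral m ∧ φ ∉ Subgroup.zpowers (rot m)

def nestedStab (m : ℕ) (N : Set (Set (ZMod m))) : Subgroup (Equiv.Perm (ZMod m)) :=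
  dihedral m ⊓ MulAction.stabilizer (Equiv.Perm (ZMod m)) N

def rotStab (m : ℕ) (N : Set (Set (ZMod m))) : Subgroup (Equiv.Perm (ZMod m)) :=
  Subgroup.zpowers (rot m) ⊓ nestedStab m N

noncomputable def alphaNum (m d k : ℕ) : ℕ :=
  {N : Set (Set (ZMod m)) | IsNested m N ∧ N.ncard = k ∧
    Nat.card (rotStab m N) = d ∧ ¬ ∃ φ ∈ nestedStab m N, IsReflection m φ}.ncard

noncomputable def betaNum (m d k : ℕ) : ℕ :=
  {N : Set (Set (ZMod m)) | IsNested m N ∧ N.ncard = k ∧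
    Nat.card (rotStab m N) = d ∧ ∃ φ ∈ nestedStab m N, IsReflection m φ}.ncard

noncomputable def gammaNum (m d k : ℕ) : ℕ := alphaNum m d k + betaNum m d k

lemma addRight_mul (m : ℕ) (c d : ZMod m) :
    (Equiv.addRight c * Equiv.addRight d : Equiv.Perm (ZMod m)) = Equiv.addRight (d + c) := by
  ext i; simp [Equiv.Perm.mul_apply, add_assoc]

lemma addRight_inv (m : ℕ) (c : ZMod m) :
    (Equiv.addRight c : Equiv.Perm (ZMod m))⁻¹ = Equiv.addRight (-c) := by
  ext i
  simp [Equiv.Perm.inv_def, Equiv.symm_apply_eq]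

lemma addRight_eq_one (m : ℕ) (c : ZMod m) :
    (Equiv.addRight c : Equiv.Perm (ZMod m)) = 1 ↔ c = 0 := by
  constructor
  · intro h
    have := Equiv.congr_fun h 0
    simpa using this
  · rintro rfl; ext i; simp

lemma rot_pow (m : ℕ) (n : ℕ) : (rot m) ^ n = Equiv.addRight ((n : ZMod m)) := by
  induction n with
  | zero => ext i; simp
  | succ n ih =>
    rw [pow_succ, ih, rot, addRight_mul]
    push_cast; ring_nf

lemma rot_zpow (m : ℕ) (z : ℤ) : (rot m) ^ z = Equiv.addRight ((z : ZMod m)) := by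
  obtain ⟨n, rfl | rfl⟩ := z.eq_nat_or_neg
  · rw [zpow_natCast, rot_pow]; norm_cast
  · rw [zpow_neg, zpow_natCast, rot_pow, addRight_inv]; push_cast; ring_nf

lemma mem_zpowers_rot {m : ℕ} [NeZero m] {g : Equiv.Perm (ZMod m)} :
    g ∈ Subgroup.zpowers (rot m) ↔ ∃ c : ZMod m, g = Equiv.addRight c := by
  constructor
  · rintro ⟨z, rfl⟩; exact ⟨(z : ZMod m), rot_zpow m z⟩
  · rintro ⟨c, rfl⟩
    refine ⟨(c.val : ℤ), ?_⟩
    show (rot m) ^ ((c.val : ℤ)) = _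
    rw [rot_zpow]; push_cast; rw [ZMod.natCast_rightInverse c]

lemma refl_apply (m : ℕ) (i : ZMod m) : cycRefl m i = -i := rfl

lemma refl_sq (m : ℕ) : cycRefl m * cycRefl m = 1 := by
  ext i; simp [cycRefl, Equiv.Perm.mul_apply]

lemma refl_inv (m : ℕ) : (cycRefl m)⁻¹ = cycRefl m := by
  rw [inv_eq_iff_mul_eq_one, refl_sq]

lemma refl_mul_rot {m : ℕ} {g : Equiv.Perm (ZMod m)} [NeZero m]
    (hg : g ∈ Subgroup.zpowers (rot m)) : cycRefl m * g = g⁻¹ * cycRefl m := by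
  obtain ⟨c, rfl⟩ := mem_zpowers_rot.mp hg
  rw [addRight_inv]
  ext i
  simp [cycRefl, Equiv.Perm.mul_apply]
  ring

lemma rot_mem_dihedral (m : ℕ) : rot m ∈ dihedral m :=
  Subgroup.subset_closure (by simp)

lemma refl_mem_dihedral (m : ℕ) : cycRefl m ∈ dihedral m :=
  Subgroup.subset_closure (by simp)

lemma zpowers_rot_le_dihedral (m : ℕ) : Subgroup.zpowers (rot m) ≤ dihedral m := by
  rw [Subgroup.zpowers_le]; exact rot_mem_dihedral m

lemma dihedral_cases {m : ℕ} [NeZero m] {x : Equiv.Perm (ZMod m)} (hx : x ∈ dihedral m) :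
    x ∈ Subgroup.zpowers (rot m) ∨ ∃ g ∈ Subgroup.zpowers (rot m), x = g * cycRefl m := by
  induction hx using Subgroup.closure_induction with
  | mem y hy =>
    rcases hy with rfl | rfl
    · exact Or.inl (Subgroup.mem_zpowers _)
    · exact Or.inr ⟨1, one_mem _, (one_mul _).symm⟩
  | one => exact Or.inl (one_mem _)
  | mul y z _ _ ihy ihz =>
    rcases ihy with hy | ⟨g, hg, rfl⟩ <;> rcases ihz with hz | ⟨g', hg', rfl⟩
    · exact Or.inl (mul_mem hy hz)
    · exact Or.inr ⟨y * g', mul_mem hy hg', (mul_assoc _ _ _).symm⟩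
    · refine Or.inr ⟨g * z⁻¹, mul_mem hg (inv_mem hz), ?_⟩
      rw [mul_assoc, mul_assoc, ← refl_mul_rot hz]
    · refine Or.inl ?_
      have : g * cycRefl m * (g' * cycRefl m) = g * (cycRefl m * g') * cycRefl m := by group
      rw [this, refl_mul_rot hg']
      have : g * (g'⁻¹ * cycRefl m) * cycRefl m = g * g'⁻¹ * (cycRefl m * cycRefl m) := by group
      rw [this, refl_sq, mul_one]
      exact mul_mem hg (inv_mem hg')
  | inv y _ ihy =>
    rcases ihy with hy | ⟨g, hg, rfl⟩
    · exact Or.inl (inv_mem hy)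
    · refine Or.inr ⟨g, hg, ?_⟩
      rw [mul_inv_rev, refl_inv, refl_mul_rot (inv_mem hg), inv_inv]

lemma refl_not_rot {m : ℕ} (hm : 3 ≤ m) : cycRefl m ∉ Subgroup.zpowers (rot m) := by
  haveI : NeZero m := ⟨by omega⟩
  intro h
  obtain ⟨c, hc⟩ := mem_zpowers_rot.mp h
  have h0 := Equiv.congr_fun hc 0
  have h1 := Equiv.congr_fun hc 1
  simp [cycRefl] at h0 h1
  rw [← h0, add_zero] at h1
  have : ((2 : ℕ) : ZMod m) = 0 := by push_cast; linear_combination -h1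
  rw [ZMod.natCast_eq_zero_iff] at this
  exact absurd (Nat.le_of_dvd (by norm_num) this) (by omega)

lemma rotmul_not_rot {m : ℕ} (hm : 3 ≤ m) {g : Equiv.Perm (ZMod m)}
    (hg : g ∈ Subgroup.zpowers (rot m)) : g * cycRefl m ∉ Subgroup.zpowers (rot m) := by
  intro h
  exact refl_not_rot hm (by simpa using mul_mem (inv_mem hg) h)

lemma isReflection_form {m : ℕ} (hm : 3 ≤ m) {φ : Equiv.Perm (ZMod m)}
    (h : IsReflection m φ) : ∃ g ∈ Subgroup.zpowers (rot m), φ = g * cycRefl m := by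
  haveI : NeZero m := ⟨by omega⟩
  rcases dihedral_cases h.1 with h' | h'
  · exact absurd h' h.2
  · exact h'

lemma rots_commute {m : ℕ} [NeZero m] {g g' : Equiv.Perm (ZMod m)}
    (hg : g ∈ Subgroup.zpowers (rot m)) (hg' : g' ∈ Subgroup.zpowers (rot m)) :
    g * g' = g' * g := by
  obtain ⟨c, rfl⟩ := mem_zpowers_rot.mp hg
  obtain ⟨c', rfl⟩ := mem_zpowers_rot.mp hg'
  rw [addRight_mul, addRight_mul, add_comm]

lemma reflection_sq {m : ℕ} (hm : 3 ≤ m) {φ : Equiv.Perm (ZMod m)}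
    (h : IsReflection m φ) : φ * φ = 1 := by
  haveI : NeZero m := ⟨by omega⟩
  obtain ⟨g, hg, rfl⟩ := isReflection_form hm h
  have : g * cycRefl m * (g * cycRefl m) = g * (cycRefl m * g) * cycRefl m := by group
  rw [this, refl_mul_rot hg]
  have : g * (g⁻¹ * cycRefl m) * cycRefl m = (g * g⁻¹) * (cycRefl m * cycRefl m) := by group
  rw [this, refl_sq]; group

lemma reflection_inv' {m : ℕ} (hm : 3 ≤ m) {φ : Equiv.Perm (ZMod m)}
    (h : IsReflection m φ) : φ⁻¹ = φ :=
  inv_eq_of_mul_eq_one_right (reflection_sq hm h)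

lemma reflection_conj {m : ℕ} (hm : 3 ≤ m) {φ x : Equiv.Perm (ZMod m)}
    (h : IsReflection m φ) (hx : x ∈ Subgroup.zpowers (rot m)) :
    φ * x * φ = x⁻¹ := by
  haveI : NeZero m := ⟨by omega⟩
  obtain ⟨g, hg, rfl⟩ := isReflection_form hm h
  have e1 : g * cycRefl m * x * (g * cycRefl m)
      = g * (cycRefl m * x) * g * cycRefl m := by group
  rw [e1, refl_mul_rot hx]
  have e2 : g * (x⁻¹ * cycRefl m) * g * cycRefl m
      = g * x⁻¹ * (cycRefl m * g) * cycRefl m := by group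
  rw [e2, refl_mul_rot hg]
  have e3 : g * x⁻¹ * (g⁻¹ * cycRefl m) * cycRefl m
      = g * x⁻¹ * g⁻¹ * (cycRefl m * cycRefl m) := by group
  rw [e3, refl_sq, mul_one, mul_assoc, rots_commute (inv_mem hx) (inv_mem hg)]
  group

lemma reflection_mul_reflection' {m : ℕ} (hm : 3 ≤ m) {φ ψ : Equiv.Perm (ZMod m)}
    (h : IsReflection m φ) (h' : IsReflection m ψ) :
    φ * ψ ∈ Subgroup.zpowers (rot m) := by
  haveI : NeZero m := ⟨by omega⟩
  obtain ⟨g, hg, rfl⟩ := isReflection_form hm h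
  obtain ⟨g', hg', rfl⟩ := isReflection_form hm h'
  have e1 : g * cycRefl m * (g' * cycRefl m) = g * (cycRefl m * g') * cycRefl m := by group
  rw [e1, refl_mul_rot hg']
  have e2 : g * (g'⁻¹ * cycRefl m) * cycRefl m = g * g'⁻¹ * (cycRefl m * cycRefl m) := by group
  rw [e2, refl_sq, mul_one]
  exact mul_mem hg (inv_mem hg')

lemma rot_mul_reflection {m : ℕ} (hm : 3 ≤ m) {g φ : Equiv.Perm (ZMod m)}
    (hg : g ∈ Subgroup.zpowers (rot m)) (h : IsReflection m φ) :
    IsReflection m (g * φ) := by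
  haveI : NeZero m := ⟨by omega⟩
  obtain ⟨g', hg', rfl⟩ := isReflection_form hm h
  exact ⟨mul_mem (zpowers_rot_le_dihedral m hg) h.1,
    by rw [← mul_assoc]; exact rotmul_not_rot hm (mul_mem hg hg')⟩

lemma exists_arc {m : ℕ} (hm : 3 ≤ m) {I : Set (ZMod m)} (hne : I.Nonempty)
    (hproper : I ≠ Set.univ) (hconn : IsConnSubset m I) :
    ∃ (a : ZMod m) (L : ℕ), 0 < L ∧ L < m ∧ I = {x | (x - a).val < L} := by
  classical
  haveI : NeZero m := ⟨by omega⟩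
  obtain ⟨x0, hx0⟩ := hne
  obtain ⟨y, hy⟩ := (Set.ne_univ_iff_exists_notMem _).mp hproper
  have hex : ∃ n : ℕ, x0 - ((n + 1 : ℕ) : ZMod m) ∉ I := by
    refine ⟨(x0 - y).val - 1, ?_⟩
    have hne0 : x0 - y ≠ 0 := sub_ne_zero.mpr (fun h => hy (h ▸ hx0))
    have hv : 1 ≤ (x0 - y).val :=
      Nat.one_le_iff_ne_zero.mpr (fun h => hne0 ((ZMod.val_eq_zero _).mp h))
    have e : ((x0 - y).val - 1 + 1) = (x0 - y).val := by omega
    rw [e, ZMod.natCast_rightInverse (x0 - y)]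
    simpa using hy
  set r := Nat.find hex with hr
  set a := x0 - (r : ZMod m) with ha'
  have haI : a ∈ I := by
    rcases Nat.eq_zero_or_pos r with h0 | h0
    · rw [ha', h0]; simpa using hx0
    · have h2 := Nat.find_min hex (show r - 1 < r by omega)
      rw [not_not] at h2
      have e : (r - 1) + 1 = r := by omega
      rw [e] at h2; exact h2
  have haI' : a - 1 ∉ I := by
    have h2 := Nat.find_spec hex
    have e : a - 1 = x0 - ((r + 1 : ℕ) : ZMod m) := by push_cast; ring
    rw [e]; exact h2
  have hex2 : ∃ n : ℕ, a + (n : ZMod m) ∉ I := by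
    refine ⟨(y - a).val, ?_⟩
    rw [ZMod.natCast_rightInverse (y - a)]
    simpa using hy
  set L := Nat.find hex2 with hL
  have hLspec : a + (L : ZMod m) ∉ I := Nat.find_spec hex2
  have hL0 : 0 < L := by
    rcases Nat.eq_zero_or_pos L with h0 | h0
    · exfalso; rw [h0] at hLspec; simp at hLspec; exact hLspec haI
    · exact h0
  have hmem : ∀ i < L, a + (i : ZMod m) ∈ I := fun i hi => not_not.mp (Nat.find_min hex2 hi)
  have hLm : L < m := by
    by_contra h
    push_neg at h
    apply hproper
    ext x; simp only [Set.mem_univ, iff_true]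
    have h2 := hmem (x - a).val (lt_of_lt_of_le (ZMod.val_lt _) h)
    rwa [ZMod.natCast_rightInverse (x - a), show a + (x - a) = x by ring] at h2
  refine ⟨a, L, hL0, hLm, ?_⟩
  ext x
  simp only [Set.mem_setOf_eq]
  constructor
  · intro hx
    have key : ∀ (u v : {z : ZMod m // z ∈ I}) (p : ((cycleGraph m).induce I).Walk u v),
        ((u : ZMod m) - a).val < L → ((v : ZMod m) - a).val < L := by
      intro u v p
      induction p with
      | nil => exact id
      | @cons u u₁ v hadj p ih =>
        intro hu
        refine ih ?_
        have hadj' : (cycleGraph m).Adj u.1 u₁.1 := hadj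
        change _ ∧ (_ ∨ _) at hadj'
        obtain ⟨hne', h1 | h1⟩ := hadj'
        · -- u₁ = u + 1
          have ecast : (u : ZMod m) - a = (((u : ZMod m) - a).val : ZMod m) :=
            (ZMod.natCast_rightInverse _).symm
          rcases Nat.lt_or_ge (((u : ZMod m) - a).val + 1) m with hv | hv
          · have e : (u₁ : ZMod m) - a = ((((u : ZMod m) - a).val + 1 : ℕ) : ZMod m) := by
              rw [h1]; push_cast; rw [← ecast]; ring
            rw [e, ZMod.val_cast_of_lt hv]
            by_contra hcon
            push_neg at hcon
            have heq : ((u : ZMod m) - a).val + 1 = L := le_antisymm (by omega) hcon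
            apply hLspec
            have : a + (L : ZMod m) = (u₁ : ZMod m) := by
              rw [← heq]; push_cast; rw [← ecast, h1]; ring
            rw [this]; exact u₁.2
          · have hvm : ((u : ZMod m) - a).val + 1 = m :=
              le_antisymm (by have := ZMod.val_lt ((u : ZMod m) - a); omega) hv
            have e : (u₁ : ZMod m) - a = 0 := by
              rw [h1]
              have : ((u : ZMod m) - a) + 1 = (((((u : ZMod m) - a).val + 1 : ℕ)) : ZMod m) := by
                push_cast; rw [← ecast]
              rw [show (u : ZMod m) + 1 - a = ((u : ZMod m) - a) + 1 by ring, this, hvm,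
                ZMod.natCast_self]
            rw [e]; simpa using hL0
        · -- u = u₁ + 1
          have ecast : (u : ZMod m) - a = (((u : ZMod m) - a).val : ZMod m) :=
            (ZMod.natCast_rightInverse _).symm
          rcases Nat.eq_zero_or_pos (((u : ZMod m) - a).val) with h0 | h0
          · exfalso
            apply haI'
            have hua : (u : ZMod m) = a := by
              have := ecast; rw [h0] at this; push_cast at this
              have : (u : ZMod m) - a = 0 := this
              linear_combination this
            have : (u₁ : ZMod m) = a - 1 := by rw [← hua]; linear_combination - h1
            rw [← this]; exact u₁.2
          · have e : (u₁ : ZMod m) - a = ((((u : ZMod m) - a).val - 1 : ℕ) : ZMod m) := by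
              have h2 : (u₁ : ZMod m) = (u : ZMod m) - 1 := by linear_combination - h1
              have e2 : (((u : ZMod m) - a).val : ℕ) = (((u : ZMod m) - a).val - 1) + 1 := by omega
              have e3 : ((((u : ZMod m) - a).val - 1 : ℕ) : ZMod m)
                  = ((u : ZMod m) - a) - 1 := by
                have e4 := ecast
                rw [e2] at e4; push_cast at e4; linear_combination - e4
              rw [h2, e3]; ring
            rw [e, ZMod.val_cast_of_lt (by omega : ((u : ZMod m) - a).val - 1 < m)]
            omega
    obtain ⟨p⟩ := hconn.preconnected ⟨a, haI⟩ ⟨x, hx⟩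
    have := key ⟨a, haI⟩ ⟨x, hx⟩ p (by simpa using hL0)
    simpa using this
  · intro hx
    have h2 := hmem _ hx
    rwa [ZMod.natCast_rightInverse (x - a), show a + (x - a) = x by ring] at h2

lemma arc_not_invariant {m : ℕ} [NeZero m] {a c : ZMod m} {L : ℕ}
    (hL0 : 0 < L) (hLm : L < m) (hc : c ≠ 0)
    (hinv : (fun x => x + c) '' {x | (x - a).val < L} = {x | (x - a).val < L}) : False := by
  set I := {x : ZMod m | (x - a).val < L} with hI
  have hbwd : ∀ x, x ∈ I → x - c ∈ I := by
    intro x hx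
    rw [← hinv] at hx
    obtain ⟨z, hz, hzx⟩ := hx
    have e : x - c = z := by rw [← hzx]; ring
    rwa [e]
  have hi1 : 1 ≤ c.val := Nat.one_le_iff_ne_zero.mpr (fun h => hc ((ZMod.val_eq_zero _).mp h))
  have him : c.val < m := ZMod.val_lt c
  have haI : a ∈ I := by simp [hI, hL0]
  have h1 : (m : ℕ) - c.val < L := by
    have h2 := hbwd a haI
    rw [hI] at h2
    simp only [Set.mem_setOf_eq] at h2
    rwa [show a - c - a = -c by ring, ZMod.neg_val, if_neg hc] at h2
  have hbJ : ¬ (a + (L : ZMod m) ∈ I) := by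
    simp only [hI, Set.mem_setOf_eq, show a + (L : ZMod m) - a = (L : ZMod m) by ring,
      ZMod.val_cast_of_lt hLm]
    omega
  have hbcJ : ¬ (a + (L : ZMod m) + c ∈ I) := by
    intro h
    have := hbwd _ h
    rw [show a + (L : ZMod m) + c - c = a + (L : ZMod m) by ring] at this
    exact hbJ this
  apply hbcJ
  simp only [hI, Set.mem_setOf_eq, show a + (L : ZMod m) + c - a = (L : ZMod m) + c by ring]
  rw [ZMod.val_add, ZMod.val_cast_of_lt hLm]
  have e2 : (L + c.val) % m = L + c.val - m := by
    rw [Nat.mod_eq_sub_mod (by omega)]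
    exact Nat.mod_eq_of_lt (by omega)
  omega

lemma rot_smul_eq_self {m : ℕ} (hm : 3 ≤ m) {g : Equiv.Perm (ZMod m)}
    (hg : g ∈ Subgroup.zpowers (rot m)) {I : Set (ZMod m)} (hne : I.Nonempty)
    (hproper : I ≠ Set.univ) (hconn : IsConnSubset m I) (h : g '' I = I) : g = 1 := by
  haveI : NeZero m := ⟨by omega⟩
  obtain ⟨c, rfl⟩ := mem_zpowers_rot.mp hg
  rcases eq_or_ne c 0 with rfl | hc
  · rw [addRight_eq_one]
  · exfalso
    obtain ⟨a, L, hL0, hLm, rfl⟩ := exists_arc hm hne hproper hconn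
    exact arc_not_invariant hL0 hLm hc h

lemma cycleGraph_connected {m : ℕ} (hm : 3 ≤ m) : (cycleGraph m).Connected := by
  haveI : NeZero m := ⟨by omega⟩
  have key : ∀ n : ℕ, (cycleGraph m).Reachable 0 (n : ZMod m) := by
    intro n
    induction n with
    | zero => exact (by rw [Nat.cast_zero] : ((0 : ℕ) : ZMod m) = 0) ▸ SimpleGraph.Reachable.refl _
    | succ n ih =>
      refine ih.trans (SimpleGraph.Adj.reachable ?_)
      show _ ∧ _
      refine ⟨?_, Or.inl (by push_cast; ring)⟩
      intro h
      push_cast at h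
      have h2 : ((1 : ℕ) : ZMod m) = 0 := by push_cast; linear_combination - h
      rw [ZMod.natCast_eq_zero_iff] at h2
      exact absurd (Nat.le_of_dvd one_pos h2) (by omega)
  constructor
  intro x y
  have hx := key x.val
  have hy := key y.val
  rw [ZMod.natCast_rightInverse x] at hx
  rw [ZMod.natCast_rightInverse y] at hy
  exact hx.symm.trans hy

lemma isConnSubset_univ {m : ℕ} (hm : 3 ≤ m) : IsConnSubset m Set.univ := by
  rw [IsConnSubset, ((cycleGraph m).induceUnivIso).connected_iff]
  exact cycleGraph_connected hm

lemma conn_supp {m : ℕ} {U : Set (ZMod m)}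
    (c : ((cycleGraph m).induce U).ConnectedComponent) :
    IsConnSubset m (Subtype.val '' c.supp) := by
  set S := Subtype.val '' c.supp with hS
  have memS : ∀ (v : {z : ZMod m // z ∈ U}),
      ((cycleGraph m).induce U).connectedComponentMk v = c → (v : ZMod m) ∈ S :=
    fun v hv => ⟨v, hv, rfl⟩
  obtain ⟨v0, hv0⟩ := Quot.exists_rep c
  have hv0' : ((cycleGraph m).induce U).connectedComponentMk v0 = c := hv0
  haveI : Nonempty ↥S := ⟨⟨v0.1, memS v0 hv0'⟩⟩
  constructor
  rintro ⟨x, vx, hvx, rfl⟩ ⟨y, vy, hvy, rfl⟩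
  obtain ⟨p⟩ := SimpleGraph.ConnectedComponent.exact (hvx.trans hvy.symm)
  have key : ∀ (u w : {z : ZMod m // z ∈ U}) (p : ((cycleGraph m).induce U).Walk u w)
      (hu : ((cycleGraph m).induce U).connectedComponentMk u = c)
      (hw : ((cycleGraph m).induce U).connectedComponentMk w = c),
      ((cycleGraph m).induce S).Reachable ⟨u.1, memS u hu⟩ ⟨w.1, memS w hw⟩ := by
    intro u w p
    induction p with
    | nil => intro hu hw; exact SimpleGraph.Reachable.refl _
    | @cons u u₁ w hadj q ih =>
      intro hu hw
      have hu₁ : ((cycleGraph m).induce U).connectedComponentMk u₁ = c := by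
        rw [← hu]
        exact (SimpleGraph.ConnectedComponent.connectedComponentMk_eq_of_adj hadj).symm
      refine (SimpleGraph.Adj.reachable ?_).trans (ih hu₁ hw)
      show (cycleGraph m).Adj u.1 u₁.1
      exact hadj
  exact key vx vy p hvx hvy

lemma card_dvd_of_free {G X : Type*} [Group G] [MulAction G X]
    (hfree : ∀ (g : G) (x : X), g • x = x → g = 1) : Nat.card G ∣ Nat.card X := by
  classical
  have hstab : ∀ x : X, MulAction.stabilizer G x = ⊥ := by
    intro x
    ext g
    simp only [MulAction.mem_stabilizer_iff, Subgroup.mem_bot]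
    exact ⟨fun h => hfree g x h, fun h => by rw [h, one_smul]⟩
  have e1 : X ≃ Σ ω : MulAction.orbitRel.Quotient G X, G ⧸ MulAction.stabilizer G ω.out :=
    MulAction.selfEquivSigmaOrbitsQuotientStabilizer G X
  have e2 : (Σ ω : MulAction.orbitRel.Quotient G X, G ⧸ MulAction.stabilizer G ω.out) ≃
      Σ _ω : MulAction.orbitRel.Quotient G X, G :=
    Equiv.sigmaCongrRight fun ω =>
      (Subgroup.quotientEquivOfEq (hstab ω.out)).trans (QuotientGroup.quotientBot (G := G)).toEquiv
  have e3 : (Σ _ω : MulAction.orbitRel.Quotient G X, G) ≃ (MulAction.orbitRel.Quotient G X) × G :=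
    Equiv.sigmaEquivProd _ _
  rw [Nat.card_congr ((e1.trans e2).trans e3), Nat.card_prod]
  exact Dvd.intro_left _ rfl

lemma sUnion_ne_univ {m : ℕ} (hm : 3 ≤ m) {N : Set (Set (ZMod m))}
    (hN : IsNested m N) (hne : N.Nonempty) : ⋃₀ N ≠ Set.univ := by
  classical
  obtain ⟨hfin, hmem, hchain, hdisj⟩ := hN
  set Mx := {I | I ∈ N ∧ ∀ J ∈ N, I ⊆ J → I = J} with hMx
  have hMxN : Mx ⊆ N := fun I hI => hI.1
  have hmax : ∀ I ∈ N, ∃ I' ∈ Mx, I ⊆ I' := by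
    intro I hI
    obtain ⟨J, hJ, hJmax⟩ := Set.Finite.exists_maximalFor id {J | J ∈ N ∧ I ⊆ J}
      (hfin.subset (fun J hJ => hJ.1)) ⟨I, hI, subset_rfl⟩
    refine ⟨J, ⟨hJ.1, fun K hK hJK => ?_⟩, hJ.2⟩
    exact le_antisymm hJK (hJmax ⟨hK, hJ.2.trans hJK⟩ hJK)
  have hU : ⋃₀ N = ⋃₀ Mx := by
    apply Set.Subset.antisymm
    · rintro x ⟨I, hI, hxI⟩
      obtain ⟨I', hI', hII'⟩ := hmax I hI
      exact ⟨I', hI', hII' hxI⟩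
    · exact Set.sUnion_mono hMxN
  intro hUuniv
  by_cases hsing : ∃ I ∈ Mx, ∃ J ∈ Mx, I ≠ J
  · obtain ⟨I, hI, J, hJ, hIJ⟩ := hsing
    have hfinMx : Mx.Finite := hfin.subset hMxN
    apply hdisj hfinMx.toFinset (by rw [Set.Finite.coe_toFinset]; exact hMxN)
    · exact Finset.one_lt_card.mpr ⟨I, by simpa using hI, J, by simpa using hJ, hIJ⟩
    · rw [Set.Finite.coe_toFinset]
      intro I' hI' J' hJ' hne'
      rcases hchain I' (hMxN hI') J' (hMxN hJ') with h | h | h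
      · exact absurd (hI'.2 J' (hMxN hJ') h) hne'
      · exact absurd (hJ'.2 I' (hMxN hI') h).symm hne'
      · exact h
    · have : (⋃ I ∈ hfinMx.toFinset, I) = Set.univ := by
        rw [← Finset.set_biUnion_coe, Set.Finite.coe_toFinset, ← Set.sUnion_eq_biUnion, ← hU,
          hUuniv]
      rw [this]
      exact isConnSubset_univ hm
  · push_neg at hsing
    obtain ⟨I0, hI0⟩ := hne
    obtain ⟨I', hI', _⟩ := hmax I0 hI0
    have hMxsub : Mx = {I'} := by
      apply Set.Subset.antisymm
      · intro J hJ; exact hsing J hJ I' hI'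
      · rintro J rfl; exact hI'
    rw [hU, hMxsub, Set.sUnion_singleton] at hUuniv
    exact (hmem I' (hMxN hI')).2.1 hUuniv

instance zpowers_rot_cyclic (m : ℕ) : IsCyclic ↥(Subgroup.zpowers (rot m)) := by
  refine ⟨⟨⟨rot m, Subgroup.mem_zpowers _⟩, ?_⟩⟩
  rintro ⟨x, hx⟩
  obtain ⟨z, rfl⟩ := Subgroup.mem_zpowers_iff.mp hx
  refine Subgroup.mem_zpowers_iff.mpr ⟨z, ?_⟩
  ext
  rw [SubgroupClass.coe_zpow]

lemma rotStab_gen (m : ℕ) (N : Set (Set (ZMod m))) :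
    ∃ ρ : Equiv.Perm (ZMod m), ρ ∈ Subgroup.zpowers (rot m) ∧ ρ ∈ rotStab m N ∧
      rotStab m N = Subgroup.zpowers ρ := by
  haveI : IsCyclic ↥(rotStab m N) :=
    Subgroup.isCyclic_of_le (inf_le_left : rotStab m N ≤ Subgroup.zpowers (rot m))
  obtain ⟨g, hg⟩ := IsCyclic.exists_generator (α := ↥(rotStab m N))
  refine ⟨g.1, (inf_le_left : rotStab m N ≤ Subgroup.zpowers (rot m)) g.2, g.2, ?_⟩
  apply le_antisymm
  · intro x hx
    obtain ⟨z, hz⟩ := Subgroup.mem_zpowers_iff.mp (hg ⟨x, hx⟩)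
    refine Subgroup.mem_zpowers_iff.mpr ⟨z, ?_⟩
    rw [← SubgroupClass.coe_zpow, hz]
  · rw [Subgroup.zpowers_le]
    exact g.2

lemma nestedStab_smul_mem {m : ℕ} {N : Set (Set (ZMod m))} {φ : Equiv.Perm (ZMod m)}
    (hφ : φ ∈ nestedStab m N) {I : Set (ZMod m)} (hI : I ∈ N) : φ • I ∈ N := by
  have hstab := MulAction.mem_stabilizer_iff.mp (Subgroup.mem_inf.mp hφ).2
  have h2 := Set.smul_mem_smul_set (a := φ) hI
  rwa [hstab] at h2

lemma nestedStab_sUnion {m : ℕ} {N : Set (Set (ZMod m))} {φ : Equiv.Perm (ZMod m)}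
    (hφ : φ ∈ nestedStab m N) : φ • ⋃₀ N = ⋃₀ N := by
  have hstab := MulAction.mem_stabilizer_iff.mp (Subgroup.mem_inf.mp hφ).2
  rw [Set.smul_set_sUnion]
  conv_rhs => rw [← hstab]
  rw [show φ • N = (φ • ·) '' N from rfl, Set.sUnion_image]

lemma orderOf_eq_card_rotStab {m : ℕ} {N : Set (Set (ZMod m))} {ρ : Equiv.Perm (ZMod m)}
    (h : rotStab m N = Subgroup.zpowers ρ) : Nat.card ↥(rotStab m N) = orderOf ρ := by
  rw [h, Nat.card_zpowers]

lemma nestedStab_iso_dihedral {m : ℕ} (hm : 3 ≤ m) {N : Set (Set (ZMod m))}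
    {ρ : Equiv.Perm (ZMod m)} (hρrot : ρ ∈ Subgroup.zpowers (rot m))
    (hρstab : ρ ∈ rotStab m N) (hREQ : rotStab m N = Subgroup.zpowers ρ)
    (hrefl : ∃ φ ∈ nestedStab m N, IsReflection m φ) :
    Nonempty (↥(nestedStab m N) ≃* DihedralGroup (Nat.card ↥(rotStab m N))) := by
  classical
  haveI : NeZero m := ⟨by omega⟩
  obtain ⟨φ, hφK, hφrefl⟩ := hrefl
  set d := Nat.card ↥(rotStab m N) with hd
  have hdord : d = orderOf ρ := orderOf_eq_card_rotStab hREQ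
  have hd0 : 0 < d := by rw [hdord]; exact orderOf_pos ρ
  haveI : NeZero d := ⟨by omega⟩
  have hρK : ρ ∈ nestedStab m N := (inf_le_right : rotStab m N ≤ nestedStab m N) hρstab
  set key : ZMod d → Equiv.Perm (ZMod m) := fun x => ρ ^ x.val with hkey
  have hkey_rot : ∀ x : ZMod d, key x ∈ Subgroup.zpowers (rot m) := fun x => pow_mem hρrot _
  have hkey_mem : ∀ x : ZMod d, key x ∈ nestedStab m N := fun x => pow_mem hρK _
  have hkey_add : ∀ x y : ZMod d, key (x + y) = key x * key y := by
    intro x y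
    rw [hkey]
    simp only
    rw [← pow_add]
    rw [pow_eq_pow_iff_modEq, ← hdord, ZMod.val_add]
    exact Nat.mod_modEq _ d
  have hkey_int : ∀ z : ℤ, ρ ^ z = key ((z : ZMod d)) := by
    intro z
    rw [hkey]
    simp only
    rw [← zpow_natCast, zpow_eq_zpow_iff_modEq, ← hdord]
    have : (((z : ZMod d).val : ℤ) : ZMod d) = (z : ZMod d) := by
      push_cast
      rw [ZMod.natCast_rightInverse]
    rw [ZMod.intCast_eq_intCast_iff] at this
    exact this.symm
  have hswap : ∀ x : ZMod d, key x * φ = φ * (key x)⁻¹ := by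
    intro x
    have h := reflection_conj hm hφrefl (hkey_rot x)
    have h2 : φ * (φ * key x * φ) = φ * (key x)⁻¹ := by rw [h]
    have h3 : φ * (φ * key x * φ) = (φ * φ) * key x * φ := by group
    rw [h3, reflection_sq hm hφrefl, one_mul] at h2
    exact h2
  have hkey_sub : ∀ x y : ZMod d, key (y - x) = (key x)⁻¹ * key y := by
    intro x y
    have := hkey_add x (y - x)
    rw [show x + (y - x) = y by ring] at this
    rw [this]; group
  set f : DihedralGroup d → ↥(nestedStab m N) := fun g =>
    match g with
    | DihedralGroup.r i => ⟨key i, hkey_mem i⟩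
    | DihedralGroup.sr i => ⟨φ * key i, mul_mem hφK (hkey_mem i)⟩ with hf
  have hfmul : ∀ a b : DihedralGroup d, f (a * b) = f a * f b := by
    rintro (i | i) (j | j) <;> apply Subtype.ext <;>
      simp only [hf, DihedralGroup.r_mul_r, DihedralGroup.r_mul_sr, DihedralGroup.sr_mul_r,
        DihedralGroup.sr_mul_sr, MulMemClass.coe_mul]
    · exact hkey_add i j
    · rw [hkey_sub i j, ← mul_assoc, ← hswap i]; group
    · rw [hkey_add i j, mul_assoc]
    · have e : φ * key i * (φ * key j) = φ * (key i * φ) * key j := by group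
      rw [e, hswap i]
      have e2 : φ * (φ * (key i)⁻¹) * key j = (φ * φ) * ((key i)⁻¹ * key j) := by group
      rw [e2, reflection_sq hm hφrefl, one_mul, hkey_sub]
  have hfinj : Function.Injective f := by
    have hkeyinj : ∀ i j : ZMod d, key i = key j → i = j := by
      intro i j h
      rw [hkey] at h
      simp only at h
      rw [pow_eq_pow_iff_modEq, ← hdord] at h
      have := h.eq_of_lt_of_lt ?_ ?_
      · exact ZMod.val_injective d this
      · exact ZMod.val_lt i
      · exact ZMod.val_lt j
    rintro (i | i) (j | j) h <;> rw [Subtype.ext_iff] at h <;> simp only [hf] at h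
    · rw [hkeyinj i j h]
    · exfalso
      apply hφrefl.2
      have : φ = key i * (key j)⁻¹ := by rw [h]; group
      rw [this]
      exact mul_mem (hkey_rot i) (inv_mem (hkey_rot j))
    · exfalso
      apply hφrefl.2
      have : φ = key j * (key i)⁻¹ := by rw [← h]; group
      rw [this]
      exact mul_mem (hkey_rot j) (inv_mem (hkey_rot i))
    · rw [hkeyinj i j (mul_left_cancel h)]
  have hfsurj : Function.Surjective f := by
    rintro ⟨x, hx⟩
    have hxdih : x ∈ dihedral m := (Subgroup.mem_inf.mp hx).1
    by_cases hxrot : x ∈ Subgroup.zpowers (rot m)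
    · have hxR : x ∈ rotStab m N := Subgroup.mem_inf.mpr ⟨hxrot, hx⟩
      rw [hREQ] at hxR
      obtain ⟨z, hz⟩ := Subgroup.mem_zpowers_iff.mp hxR
      exact ⟨DihedralGroup.r (z : ZMod d), Subtype.ext (by simp only [hf]; rw [← hkey_int, hz])⟩
    · have hxrefl : IsReflection m x := ⟨hxdih, hxrot⟩
      have hprod : φ * x ∈ Subgroup.zpowers (rot m) :=
        reflection_mul_reflection' hm hφrefl hxrefl
      have hprodR : φ * x ∈ rotStab m N :=
        Subgroup.mem_inf.mpr ⟨hprod, mul_mem hφK hx⟩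
      rw [hREQ] at hprodR
      obtain ⟨z, hz⟩ := Subgroup.mem_zpowers_iff.mp hprodR
      refine ⟨DihedralGroup.sr (z : ZMod d), Subtype.ext ?_⟩
      simp only [hf]
      rw [← hkey_int, hz, ← mul_assoc, reflection_sq hm hφrefl, one_mul]
  have hfone : f 1 = 1 := by
    apply Subtype.ext
    rw [DihedralGroup.one_def]
    show key 0 = 1
    rw [hkey]
    simp [ZMod.val_zero]
  let F : DihedralGroup d →* ↥(nestedStab m N) :=
    { toFun := f, map_one' := hfone, map_mul' := hfmul }
  exact ⟨(MulEquiv.ofBijective F ⟨hfinj, hfsurj⟩).symm⟩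

lemma perm_smul_set {α : Type*} (g : Equiv.Perm α) (s : Set α) : g • s = g '' s := rfl

lemma rot_adj {m : ℕ} [NeZero m] {g : Equiv.Perm (ZMod m)}
    (hg : g ∈ Subgroup.zpowers (rot m)) {x y : ZMod m}
    (h : (cycleGraph m).Adj x y) : (cycleGraph m).Adj (g x) (g y) := by
  obtain ⟨c, rfl⟩ := mem_zpowers_rot.mp hg
  change _ ∧ (_ ∨ _) at h ⊢
  obtain ⟨hne, h1 | h1⟩ := h
  · refine ⟨fun hc => hne (add_right_cancel (show x + c = y + c from hc)), Or.inl ?_⟩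
    show y + c = (x + c) + 1
    rw [h1]; ring
  · refine ⟨fun hc => hne (add_right_cancel (show x + c = y + c from hc)), Or.inr ?_⟩
    show x + c = (y + c) + 1
    rw [h1]; ring

theorem stabilizer_cyclic_or_dihedral (m : ℕ) (hm : 3 ≤ m)
    (N : Set (Set (ZMod m))) (hN : IsNested m N) (hne : N.Nonempty) :
    ∃ d : ℕ, 0 < d ∧ d ∣ N.ncard ∧
      d ∣ Nat.card ((cycleGraph m).induce (⋃₀ N)).ConnectedComponent ∧
      ((∃ ρ ∈ Subgroup.zpowers (rot m), nestedStab m N = Subgroup.zpowers ρ ∧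
          Nat.card (nestedStab m N) = d) ∨
        Nonempty ((nestedStab m N) ≃* DihedralGroup d)) := by
  classical
  haveI : NeZero m := ⟨by omega⟩
  obtain ⟨ρ, hρrot, hρstab, hREQ⟩ := rotStab_gen m N
  have hprops := hN.2.1
  set d := Nat.card ↥(rotStab m N) with hd
  have hd0 : 0 < d := by rw [hd, orderOf_eq_card_rotStab hREQ]; exact orderOf_pos ρ
  have hRle : rotStab m N ≤ nestedStab m N := inf_le_right
  have hRrot : ∀ g ∈ rotStab m N, g ∈ Subgroup.zpowers (rot m) := fun g hg =>
    (inf_le_left : rotStab m N ≤ Subgroup.zpowers (rot m)) hg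
  have hfreecore : ∀ g ∈ rotStab m N, ∀ I : Set (ZMod m), I.Nonempty → I ≠ Set.univ →
      IsConnSubset m I → g '' I = I → g = 1 := fun g hg I h1 h2 h3 h4 =>
    rot_smul_eq_self hm (hRrot g hg) h1 h2 h3 h4
  refine ⟨d, hd0, ?_, ?_, ?_⟩
  · -- d ∣ N.ncard
    letI act : MulAction ↥(rotStab m N) {I : Set (ZMod m) // I ∈ N} :=
      { smul := fun g I => ⟨g.1 • I.1, nestedStab_smul_mem (hRle g.2) I.2⟩,
        one_smul := fun I => Subtype.ext (by
          show ((1 : ↥(rotStab m N)) : Equiv.Perm (ZMod m)) • I.1 = I.1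
          rw [OneMemClass.coe_one, one_smul]),
        mul_smul := fun g h I => Subtype.ext (by
          show ((g * h : ↥(rotStab m N)) : Equiv.Perm (ZMod m)) • I.1
            = (g : Equiv.Perm (ZMod m)) • ((h : Equiv.Perm (ZMod m)) • I.1)
          rw [MulMemClass.coe_mul, mul_smul]) }
    have hfree : ∀ (g : ↥(rotStab m N)) (I : {I : Set (ZMod m) // I ∈ N}),
        g • I = I → g = 1 := by
      intro g I hgI
      have h' : (g : Equiv.Perm (ZMod m)) • I.1 = I.1 := congrArg Subtype.val hgI
      rw [perm_smul_set] at h'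
      obtain ⟨hne', hproper', hconn'⟩ := hprops I.1 I.2
      exact Subtype.ext (hfreecore g.1 g.2 I.1 hne' hproper' hconn' h')
    have hdvd := card_dvd_of_free hfree
    rwa [← hd, Nat.card_coe_set_eq] at hdvd
  · -- d ∣ number of connected components
    have hUproper : ⋃₀ N ≠ Set.univ := sUnion_ne_univ hm hN hne
    have hUinv : ∀ g ∈ nestedStab m N, ∀ x ∈ ⋃₀ N, g x ∈ ⋃₀ N := by
      intro g hg x hx
      have h2 := Set.smul_mem_smul_set (a := g) hx
      rwa [nestedStab_sUnion hg] at h2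
    let hom : ↥(rotStab m N) → ((cycleGraph m).induce (⋃₀ N) →g (cycleGraph m).induce (⋃₀ N)) :=
      fun g =>
      { toFun := fun v => ⟨(g : Equiv.Perm (ZMod m)) v.1, hUinv g.1 (hRle g.2) v.1 v.2⟩,
        map_rel' := fun {u v} h => rot_adj (hRrot g.1 g.2) h }
    letI act2 : MulAction ↥(rotStab m N) ((cycleGraph m).induce (⋃₀ N)).ConnectedComponent :=
      { smul := fun g c => c.map (hom g),
        one_smul := fun c => by
          refine SimpleGraph.ConnectedComponent.ind (fun v => ?_) c
          show (((cycleGraph m).induce (⋃₀ N)).connectedComponentMk v).map (hom 1)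
            = ((cycleGraph m).induce (⋃₀ N)).connectedComponentMk v
          rw [SimpleGraph.ConnectedComponent.map_mk]
          congr 1,
        mul_smul := fun g h c => by
          refine SimpleGraph.ConnectedComponent.ind (fun v => ?_) c
          show (((cycleGraph m).induce (⋃₀ N)).connectedComponentMk v).map (hom (g * h))
            = ((((cycleGraph m).induce (⋃₀ N)).connectedComponentMk v).map (hom h)).map (hom g)
          rw [SimpleGraph.ConnectedComponent.map_mk, SimpleGraph.ConnectedComponent.map_mk,
            SimpleGraph.ConnectedComponent.map_mk]
          congr 1 }
    have hsmul_mk : ∀ (g : ↥(rotStab m N)) (v : {z : ZMod m // z ∈ ⋃₀ N}),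
        g • (((cycleGraph m).induce (⋃₀ N)).connectedComponentMk v)
          = ((cycleGraph m).induce (⋃₀ N)).connectedComponentMk (hom g v) := fun g v =>
      SimpleGraph.ConnectedComponent.map_mk (hom g) v
    have hfree2 : ∀ (g : ↥(rotStab m N))
        (c : ((cycleGraph m).induce (⋃₀ N)).ConnectedComponent), g • c = c → g = 1 := by
      intro g c hgc
      set S := Subtype.val '' c.supp with hS
      obtain ⟨v0, hv0⟩ := Quot.exists_rep c
      have hSne : S.Nonempty := ⟨v0.1, v0, hv0, rfl⟩
      have hSconn := conn_supp c
      have hSsubU : S ⊆ ⋃₀ N := by rintro x ⟨v, hv, rfl⟩; exact v.2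
      have hSproper : S ≠ Set.univ := fun h =>
        hUproper (Set.univ_subset_iff.mp (h ▸ hSsubU))
      have hfix : ∀ (g' : ↥(rotStab m N)), g' • c = c → ∀ x ∈ S,
          (g' : Equiv.Perm (ZMod m)) x ∈ S := by
        rintro g' hg'c x ⟨v, hv, rfl⟩
        refine ⟨(hom g') v, ?_, rfl⟩
        show ((cycleGraph m).induce (⋃₀ N)).connectedComponentMk ((hom g') v) = c
        rw [← hsmul_mk g' v]
        have hv' : ((cycleGraph m).induce (⋃₀ N)).connectedComponentMk v = c := hv
        rw [hv', hg'c]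
      have hinv2 : (g : Equiv.Perm (ZMod m)) '' S = S := by
        apply Set.Subset.antisymm
        · rintro x2 ⟨x, hx, rfl⟩
          exact hfix g hgc x hx
        · intro x hx
          have hginv : (g⁻¹ : ↥(rotStab m N)) • c = c := by
            conv_lhs => rw [← hgc]
            rw [← mul_smul, inv_mul_cancel, one_smul]
          have h2 := hfix g⁻¹ hginv x hx
          refine ⟨((g⁻¹ : ↥(rotStab m N)) : Equiv.Perm (ZMod m)) x, h2, ?_⟩
          rw [InvMemClass.coe_inv]
          exact Equiv.apply_symm_apply (g : Equiv.Perm (ZMod m)) x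
      exact Subtype.ext (hfreecore g.1 g.2 S hSne hSproper hSconn hinv2)
    exact card_dvd_of_free hfree2
  · -- structure of the stabilizer
    by_cases hrefl : ∃ φ ∈ nestedStab m N, IsReflection m φ
    · exact Or.inr (nestedStab_iso_dihedral hm hρrot hρstab hREQ hrefl)
    · left
      have hKR : nestedStab m N = rotStab m N := by
        apply le_antisymm
        · intro x hx
          by_cases hxrot : x ∈ Subgroup.zpowers (rot m)
          · exact Subgroup.mem_inf.mpr ⟨hxrot, hx⟩
          · exact absurd ⟨x, hx, (Subgroup.mem_inf.mp hx).1, hxrot⟩ hrefl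
        · exact hRle
      refine ⟨ρ, hρrot, ?_, ?_⟩
      · rw [hKR, hREQ]
      · rw [hKR]
end

section
/- Let N be a nonempty nested set of C_m whose stabilizer (D_m)_N equals the cyclic group ⟨σ_{m/d}⟩ of order d (in particular it contains no reflection), where d divides m. Then for every positive divisor ℓ of d, the following identity of formal power series in ℚ⟦t⟧ holds: Σ_{q ≥ 1} c_q t^q = (ℓ/d) · Σ_{r | d/ℓ} μ(r) · (t^{rℓ}/(1 − t^{rℓ}))^{|N|/(rℓ)}, where c_q is the number of (D_m)_N-orbits of exponent vectors on N of degree q whose isotropy group has order exactly ℓ, the sum is over positive divisors r of d/ℓ, and μ is the classical number-theoretic Möbius function. -/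
open Pointwise

section Helpers

variable {β : Type*}

lemma perm_smul_set_s10 (φ : Equiv.Perm β) (S : Set β) : φ • S = φ '' S := rfl

lemma mem_perm_smul_set {φ : Equiv.Perm β} {S : Set β} {x : β} :
    x ∈ φ • S ↔ φ.symm x ∈ S := by
  rw [perm_smul_set_s10]
  constructor
  · rintro ⟨y, hy, rfl⟩; simpa using hy
  · intro h; exact ⟨φ.symm x, h, by simp⟩

end Helpers

section Arc

variable {m : ℕ}

/-- distance from basepoint -/
def zval (a x : ZMod m) : ℕ := (x - a).val

lemma zval_inj [NeZero m] {a x y : ZMod m} (h : zval a x = zval a y) : x = y := by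
  have h1 : ((zval a x : ℕ) : ZMod m) = x - a := ZMod.natCast_rightInverse _
  have h2 : ((zval a y : ℕ) : ZMod m) = y - a := ZMod.natCast_rightInverse _
  rw [h, h2] at h1
  linear_combination h1.symm

lemma zval_eq_zero [NeZero m] {a x : ZMod m} (h : zval a x = 0) : x = a := by
  have h2 := (ZMod.val_eq_zero (x - a)).mp h
  linear_combination h2

lemma zval_lt [NeZero m] (a x : ZMod m) : zval a x < m := ZMod.val_lt _

lemma zval_add_cast [NeZero m] (a : ZMod m) {j : ℕ} (hj : j < m) :
    zval a (a + (j : ZMod m)) = j := by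
  unfold zval
  rw [add_sub_cancel_left, ZMod.val_cast_of_lt hj]

lemma eq_add_zval [NeZero m] (a x : ZMod m) : x = a + ((zval a x : ℕ) : ZMod m) := by
  have h1 : ((zval a x : ℕ) : ZMod m) = x - a := ZMod.natCast_rightInverse _
  rw [h1]; ring

/-- step lemma: if y = x + 1 and y ≠ a then zval a y = zval a x + 1. -/
lemma zval_step [NeZero m] {a x y : ZMod m} (hxy : y = x + 1) (hya : y ≠ a) :
    zval a y = zval a x + 1 := by
  have hlt : zval a x < m := zval_lt a x
  rcases Nat.lt_or_ge (zval a x + 1) m with h | h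
  · unfold zval at *
    have : y - a = ((zval a x + 1 : ℕ) : ZMod m) := by
      push_cast
      rw [hxy]
      have h1 : ((zval a x : ℕ) : ZMod m) = x - a := ZMod.natCast_rightInverse _
      rw [h1]; ring
    rw [this]
    exact ZMod.val_cast_of_lt h
  · exfalso
    have hm : zval a x = m - 1 := by omega
    have hx : x - a = ((m - 1 : ℕ) : ZMod m) := by
      rw [← hm]; exact (ZMod.natCast_rightInverse _).symm
    apply hya
    have hmm : ((m : ℕ) : ZMod m) = 0 := ZMod.natCast_self m
    have h1m : (1 : ℕ) ≤ m := Nat.one_le_iff_ne_zero.mpr (NeZero.ne m)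
    have : ((m - 1 : ℕ) : ZMod m) = -1 := by
      have := Nat.cast_sub h1m (R := ZMod m)
      rw [this, hmm]; ring
    rw [hxy]
    have : x = a - 1 := by
      have := hx; rw [‹((m - 1 : ℕ) : ZMod m) = -1›] at this
      linear_combination this
    rw [this]; ring

lemma zval_adj [NeZero m] {a x y : ZMod m} (hadj : (cycleGraph m).Adj x y)
    (hxa : x ≠ a) (hya : y ≠ a) :
    zval a y = zval a x + 1 ∨ zval a x = zval a y + 1 := by
  rcases hadj.2 with h | h
  · exact Or.inl (zval_step h hya)
  · exact Or.inr (zval_step h hxa)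

/-- IVT along a walk in the induced graph -/
lemma walk_ivt [NeZero m] {I : Set (ZMod m)} (ha : a ∉ I) {u v : I}
    (p : ((cycleGraph m).induce I).Walk u v) :
    ∀ t : ℕ, ((zval a u.1 ≤ t ∧ t ≤ zval a v.1) ∨ (zval a v.1 ≤ t ∧ t ≤ zval a u.1)) →
      ∃ w ∈ I, zval a w = t := by
  induction p with
  | @nil x => intro t ht; exact ⟨x.1, x.2, by omega⟩
  | @cons x y z h p ih =>
    intro t ht
    have hadj : (cycleGraph m).Adj x.1 y.1 := h
    have hxa : x.1 ≠ a := fun e => ha (e ▸ x.2)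
    have hya : y.1 ≠ a := fun e => ha (e ▸ y.2)
    rcases eq_or_ne t (zval a x.1) with rfl | hne
    · exact ⟨x.1, x.2, rfl⟩
    · apply ih
      rcases zval_adj hadj hxa hya with h1 | h1 <;> omega

/-- A connected nonempty proper subset of the cycle is an arc. -/
lemma conn_arc [NeZero m] {I : Set (ZMod m)} (hne : I.Nonempty) (hproper : I ≠ Set.univ)
    (hconn : IsConnSubset m I) :
    ∃ (a : ZMod m) (lo hi : ℕ), a ∉ I ∧ 1 ≤ lo ∧ lo ≤ hi ∧ hi < m ∧
      (∀ x, x ∈ I ↔ (lo ≤ zval a x ∧ zval a x ≤ hi)) := by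
  have : ∃ a, a ∉ I := by
    by_contra h; push_neg at h; exact hproper (Set.eq_univ_of_forall h)
  obtain ⟨a, ha⟩ := this
  have hIfin : I.Finite := Set.toFinite I
  have hJfin : ((zval a) '' I).Finite := hIfin.image _
  set F : Finset ℕ := hJfin.toFinset with hF
  have hFne : F.Nonempty := by
    simpa [hF, Set.Finite.toFinset_nonempty] using hne.image (zval a)
  set lo := F.min' hFne with hlo
  set hi := F.max' hFne with hhi
  have hmemF : ∀ t, t ∈ F ↔ ∃ x ∈ I, zval a x = t := by
    intro t; simp [hF, Set.Finite.mem_toFinset, Set.mem_image]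
  obtain ⟨u, hu, huv⟩ := (hmemF lo).mp (F.min'_mem hFne)
  obtain ⟨w, hw, hwv⟩ := (hmemF hi).mp (F.max'_mem hFne)
  refine ⟨a, lo, hi, ha, ?_, ?_, ?_, ?_⟩
  · by_contra h
    have h0 : lo = 0 := by omega
    exact ha (zval_eq_zero (h0 ▸ huv) ▸ hu)
  · exact F.min'_le _ (F.max'_mem hFne)
  · have := (hmemF hi).mp (F.max'_mem hFne)
    obtain ⟨x, hx, hxv⟩ := this
    rw [← hxv]; exact zval_lt a x
  · intro x
    constructor
    · intro hx
      have : zval a x ∈ F := (hmemF _).mpr ⟨x, hx, rfl⟩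
      exact ⟨F.min'_le _ this, F.le_max' _ this⟩
    · rintro ⟨h1, h2⟩
      have hreach : ((cycleGraph m).induce I).Reachable ⟨u, hu⟩ ⟨w, hw⟩ :=
        hconn.preconnected _ _
      obtain ⟨p⟩ := hreach
      have hcond : (zval a u ≤ zval a x ∧ zval a x ≤ zval a w) ∨
          (zval a w ≤ zval a x ∧ zval a x ≤ zval a u) := by left; omega
      obtain ⟨y, hy, hyv⟩ := walk_ivt ha p (zval a x) hcond
      have : y = x := zval_inj (by rw [hyv])
      exact this ▸ hy

/-- A connected nonempty proper subset admits no nontrivial translation symmetry. -/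
lemma no_translation [NeZero m] {I : Set (ZMod m)} (hne : I.Nonempty) (hproper : I ≠ Set.univ)
    (hconn : IsConnSubset m I) (c : ZMod m) (hc : (fun x => x + c) '' I = I) : c = 0 := by
  obtain ⟨a, lo, hi, ha, hlo1, hlohi, hhim, hmem⟩ := conn_arc hne hproper hconn
  have hiff : ∀ x, x ∈ I ↔ x + c ∈ I := by
    intro x
    constructor
    · intro hx; rw [← hc]; exact ⟨x, hx, rfl⟩
    · intro hx
      rw [← hc] at hx
      obtain ⟨y, hy, hyx⟩ := hx
      have h' : y + c = x + c := hyx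
      have : y = x := add_right_cancel h'
      exact this ▸ hy
  set x₀ : ZMod m := a + (lo : ZMod m) with hx₀
  have hx₀I : x₀ ∈ I := by
    rw [hmem, hx₀, zval_add_cast a (by omega)]; omega
  have hpred : ∀ x : ZMod m, x ∈ I → x - 1 ∉ I → x = x₀ := by
    intro x hx hx1
    set j := zval a x with hj
    have hjr : lo ≤ j ∧ j ≤ hi := (hmem x).mp hx
    rcases eq_or_lt_of_le hjr.1 with he | hlt
    · rw [eq_add_zval a x, ← hj, ← he]
    · exfalso
      apply hx1
      have hxe : x = a + (j : ZMod m) := eq_add_zval a x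
      have : x - 1 = a + ((j - 1 : ℕ) : ZMod m) := by
        rw [hxe, Nat.cast_sub (by omega)]
        push_cast; ring
      rw [hmem, this, zval_add_cast a (by omega)]
      omega
  have hx₀1 : x₀ - 1 ∉ I := by
    intro hmem1
    have : x₀ - 1 = a + ((lo - 1 : ℕ) : ZMod m) := by
      rw [hx₀, Nat.cast_sub (by omega)]
      push_cast; ring
    rw [hmem, this, zval_add_cast a (by omega)] at hmem1
    omega
  have h1 : x₀ + c ∈ I := (hiff x₀).mp hx₀I
  have h2 : (x₀ + c) - 1 ∉ I := by
    intro hbad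
    have : (x₀ - 1) + c ∈ I := by
      have e : (x₀ - 1) + c = (x₀ + c) - 1 := by ring
      rw [e]; exact hbad
    exact hx₀1 ((hiff _).mpr this)
  have := hpred _ h1 h2
  have : x₀ + c = x₀ := this
  linear_combination this

end Arc

section OrbitDecomp

variable {β : Type*}

lemma smul_pow_add (ψ : Equiv.Perm β) (a b : ℕ) (I : Set β) :
    ψ ^ a • (ψ ^ b • I) = ψ ^ (a + b) • I := by
  rw [← mul_smul, ← pow_add]

lemma smul_pow_mem {ψ : Equiv.Perm β} {M : Set (Set β)}
    (hinv : ∀ I ∈ M, ψ • I ∈ M) (k : ℕ) : ∀ I ∈ M, ψ ^ k • I ∈ M := by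
  induction k with
  | zero => intro I hI; simpa using hI
  | succ k ih =>
    intro I hI
    have : ψ ^ (k + 1) • I = ψ • (ψ ^ k • I) := by
      rw [← mul_smul, ← pow_succ']
    rw [this]
    exact hinv _ (ih I hI)

lemma smul_pow_mul_fix {ψ : Equiv.Perm β} {I : Set β} {e : ℕ} (hfix : ψ ^ e • I = I) :
    ∀ j : ℕ, ψ ^ (e * j) • I = I := by
  intro j
  induction j with
  | zero => simp
  | succ j ih =>
    have : e * (j + 1) = e + e * j := by ring
    rw [this, ← smul_pow_add, ih, hfix]

lemma smul_pow_mod {ψ : Equiv.Perm β} {I : Set β} {e : ℕ} (he : 0 < e)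
    (hfix : ψ ^ e • I = I) (k : ℕ) : ψ ^ k • I = ψ ^ (k % e) • I := by
  conv_lhs => rw [← Nat.div_add_mod k e]
  rw [Nat.add_comm, ← smul_pow_add, smul_pow_mul_fix hfix]

lemma orbit_decomp (ψ : Equiv.Perm β) (e : ℕ) (he : 0 < e) :
    ∀ (n : ℕ) (M : Set (Set β)), M.Finite → M.ncard ≤ n →
      (∀ I ∈ M, ψ • I ∈ M) → (∀ I ∈ M, ψ ^ e • I = I) →
      (∀ I ∈ M, ∀ k : ℕ, ψ ^ k • I = I → e ∣ k) →
      ∃ R : Finset (Set β), ↑R ⊆ M ∧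
        (∀ I ∈ M, ∃! p : Set β × ℕ, (p.1 ∈ R ∧ p.2 < e) ∧ I = ψ ^ p.2 • p.1) := by
  intro n
  induction n with
  | zero =>
    intro M hfin hcard _ _ _
    have : M = ∅ := (Set.ncard_eq_zero hfin).mp (Nat.le_zero.mp hcard)
    exact ⟨∅, by simp [this], by simp [this]⟩
  | succ n ih =>
    intro M hfin hcard hinv hper hfree
    rcases M.eq_empty_or_nonempty with rfl | ⟨I₀, hI₀⟩
    · exact ⟨∅, by simp, by simp⟩
    classical
    set O : Finset (Set β) := (Finset.range e).image (fun k => ψ ^ k • I₀) with hO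
    have hOsub : ↑O ⊆ M := by
      intro I hI
      simp only [hO, Finset.coe_image, Set.mem_image, Finset.coe_range, Set.mem_Iio] at hI
      obtain ⟨k, _, rfl⟩ := hI
      exact smul_pow_mem hinv k I₀ hI₀
    have hI₀fix : ψ ^ e • I₀ = I₀ := hper _ hI₀
    -- injectivity on range e for any J ∈ M
    have hinj : ∀ J ∈ M, ∀ k < e, ∀ j < e, ψ ^ k • J = ψ ^ j • J → k = j := by
      intro J hJ k hk j hj hkj
      rcases Nat.le_total k j with h | h
      · have h1 : ψ ^ (j - k) • (ψ ^ k • J) = ψ ^ k • J := by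
          rw [smul_pow_add, Nat.sub_add_cancel h, hkj]
        have hd := hfree _ (smul_pow_mem hinv k J hJ) _ h1
        have h0 := Nat.eq_zero_of_dvd_of_lt hd
        rcases Nat.eq_zero_or_pos (j - k) with h2 | h2
        · omega
        · have := h0 (by omega); omega
      · have h1 : ψ ^ (k - j) • (ψ ^ j • J) = ψ ^ j • J := by
          rw [smul_pow_add, Nat.sub_add_cancel h, ← hkj]
        have hd := hfree _ (smul_pow_mem hinv j J hJ) _ h1
        have h0 := Nat.eq_zero_of_dvd_of_lt hd
        rcases Nat.eq_zero_or_pos (k - j) with h2 | h2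
        · omega
        · have := h0 (by omega); omega
    have hOcard : O.card = e := by
      rw [hO, Finset.card_image_of_injOn, Finset.card_range]
      intro k hk j hj hkj
      simp only [Finset.coe_range, Set.mem_Iio] at hk hj
      exact hinj I₀ hI₀ k hk j hj hkj
    set M' := M \ ↑O with hM'
    have hfin' : M'.Finite := hfin.diff
    have hcard' : M'.ncard ≤ n := by
      have h1 : M'.ncard = M.ncard - O.card := by
        rw [hM', Set.ncard_diff hOsub (O.finite_toSet), Set.ncard_coe_finset]
      have h2 : (↑O : Set (Set β)).Nonempty := by
        refine ⟨I₀, ?_⟩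
        simp only [hO, Finset.coe_image, Set.mem_image, Finset.coe_range, Set.mem_Iio]
        exact ⟨0, he, by simp⟩
      have h3 : 1 ≤ O.card := by
        rw [hOcard]; omega
      omega
    have hmemO : ∀ k : ℕ, ψ ^ k • I₀ ∈ (↑O : Set (Set β)) := by
      intro k
      simp only [hO, Finset.coe_image, Set.mem_image, Finset.coe_range, Set.mem_Iio]
      exact ⟨k % e, Nat.mod_lt _ he, (smul_pow_mod he hI₀fix k).symm⟩
    have hinv' : ∀ I ∈ M', ψ • I ∈ M' := by
      rintro I ⟨hIM, hIO⟩
      refine ⟨hinv _ hIM, fun hc => hIO ?_⟩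
      simp only [hO, Finset.coe_image, Set.mem_image, Finset.coe_range, Set.mem_Iio] at hc
      obtain ⟨k, hk, hke⟩ := hc
      have : ψ ^ (e - 1) • (ψ • I) = ψ ^ (e - 1) • (ψ ^ k • I₀) := by rw [hke]
      have h2 : ψ ^ (e - 1) • (ψ • I) = ψ ^ e • I := by
        have : (ψ : Equiv.Perm β) • I = ψ ^ 1 • I := by rw [pow_one]
        rw [this, smul_pow_add, Nat.sub_add_cancel he]
      rw [h2, hper _ hIM, smul_pow_add] at this
      rw [this]
      exact hmemO _
    obtain ⟨R', hR'sub, hR'⟩ := ih M' hfin' hcard'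
      hinv' (fun I hI => hper I hI.1) (fun I hI => hfree I hI.1)
    refine ⟨insert I₀ R', ?_, ?_⟩
    · intro I hI
      rcases Finset.mem_insert.mp (by exact_mod_cast hI) with h | h
      · exact h ▸ hI₀
      · exact (hR'sub h).1
    · intro I hIM
      by_cases hIO : I ∈ (↑O : Set (Set β))
      · -- I is in the orbit of I₀
        simp only [hO, Finset.coe_image, Set.mem_image, Finset.coe_range, Set.mem_Iio] at hIO
        obtain ⟨k, hk, rfl⟩ := hIO
        refine ⟨(I₀, k), ⟨⟨Finset.mem_insert_self _ _, hk⟩, rfl⟩, ?_⟩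
        rintro ⟨r, j⟩ ⟨⟨hr, hj⟩, hrj⟩
        rcases Finset.mem_insert.mp hr with h | hr'
        · subst h
          have h2 := hinj _ hI₀ j hj k hk hrj.symm
          simp [h2]
        · exfalso
          have hrM' := hR'sub hr'
          have h1 : ψ ^ ((e - 1) * j) • (ψ ^ j • r) = r := by
            rw [smul_pow_add]
            have : (e - 1) * j + j = e * j := by
              cases e with
              | zero => omega
              | succ e' => simp [Nat.succ_sub_one, Nat.succ_mul]
            rw [this]
            exact smul_pow_mul_fix (hper _ hrM'.1) j
          rw [← hrj] at h1
          have : r ∈ (↑O : Set (Set β)) := by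
            rw [← h1, smul_pow_add]
            exact hmemO _
          exact hrM'.2 this
      · have hIM' : I ∈ M' := ⟨hIM, hIO⟩
        obtain ⟨⟨r, j⟩, ⟨⟨hr, hj⟩, hrj⟩, huniq⟩ := hR' I hIM'
        refine ⟨(r, j), ⟨⟨Finset.mem_insert_of_mem hr, hj⟩, hrj⟩, ?_⟩
        rintro ⟨r', j'⟩ ⟨⟨hr', hj'⟩, hrj'⟩
        rcases Finset.mem_insert.mp hr' with rfl | hr'' 
        · exfalso
          exact hIO (hrj' ▸ hmemO j')
        · exact huniq (r', j') ⟨⟨hr'', hj'⟩, hrj'⟩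

end OrbitDecomp

open PowerSeries

noncomputable def Se (e : ℕ) : PowerSeries ℚ :=
  PowerSeries.mk fun q => if q ≠ 0 ∧ e ∣ q then 1 else 0

lemma sum_moebius_divisors (n : ℕ) :
    ∑ r ∈ n.divisors, ArithmeticFunction.moebius r = if n = 1 then 1 else 0 := by
  have h := congrArg (fun f => f n) ArithmeticFunction.moebius_mul_coe_zeta
  simp only [ArithmeticFunction.coe_mul_zeta_apply, ArithmeticFunction.one_apply] at h
  exact h

lemma Se_mul_geom {e : ℕ} (he : 0 < e) : Se e * (1 - X ^ e) = (X : PowerSeries ℚ) ^ e := by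
  ext q
  rw [mul_sub, mul_one, map_sub, PowerSeries.coeff_mul_X_pow', PowerSeries.coeff_X_pow]
  simp only [Se, PowerSeries.coeff_mk]
  by_cases hA : e ∣ q
  · obtain ⟨c, rfl⟩ := hA
    by_cases hc0 : c = 0
    · subst hc0
      simp only [Nat.mul_zero]
      rw [if_neg (by tauto), if_neg (by omega), if_neg (by omega)]
      ring
    by_cases hc1 : c = 1
    · subst hc1
      simp only [Nat.mul_one]
      rw [if_pos ⟨he.ne', dvd_rfl⟩, if_pos le_rfl, if_neg (by omega)]
      norm_num
    · have hc2 : 2 ≤ c := by omega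
      have hlt : e < e * c := by nlinarith
      have hsub : e * c - e = e * (c - 1) := by
        cases c with
        | zero => omega
        | succ n =>
          simp only [Nat.add_sub_cancel, Nat.mul_succ]
          try omega
      have hd2 : e ∣ e * c - e := hsub ▸ dvd_mul_right e (c - 1)
      have hne : e * c - e ≠ 0 := by omega
      have hq0 : e * c ≠ 0 := by positivity
      have hdvd : e ∣ e * c := dvd_mul_right e c
      split_ifs
      all_goals try ring
      all_goals exfalso
      all_goals first | omega | tauto
  · have h4 : ¬(e * 0 = 0) → True := fun _ => trivial
    have h5 : ¬(q - e ≠ 0 ∧ e ∣ q - e) := by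
      rintro ⟨h2, h3⟩
      rcases le_or_gt e q with h1 | h1
      · refine hA ?_
        have h6 : e ∣ (q - e) + e := Nat.dvd_add h3 dvd_rfl
        rwa [Nat.sub_add_cancel h1] at h6
      · omega
    have h6 : q ≠ e := by rintro rfl; exact hA dvd_rfl
    have h7 : ¬(q ≠ 0 ∧ e ∣ q) := fun h => hA h.2
    split_ifs
    all_goals try ring
    all_goals exfalso
    all_goals first | omega | tauto

lemma geom_eq_Se {e : ℕ} (he : 0 < e) :
    (X : PowerSeries ℚ) ^ e * (1 - X ^ e)⁻¹ = Se e := by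
  have hc : PowerSeries.constantCoeff (R := ℚ) (1 - X ^ e) ≠ 0 := by
    rw [map_sub, map_one]
    have : PowerSeries.constantCoeff (R := ℚ) (X ^ e) = 0 := by
      rw [← PowerSeries.coeff_zero_eq_constantCoeff, PowerSeries.coeff_X_pow,
        if_neg (by omega)]
    rw [this]
    norm_num
  have h2 : Se e * (1 - X ^ e) * (1 - X ^ e)⁻¹ = X ^ e * (1 - X ^ e)⁻¹ := by
    rw [Se_mul_geom he]
  rw [mul_assoc, PowerSeries.mul_inv_cancel _ hc, mul_one] at h2
  exact h2.symm

lemma coeff_Se_pow {ι : Type*} [DecidableEq ι] (e q : ℕ) (R : Finset ι) :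
    (PowerSeries.coeff (R := ℚ) q) ((Se e) ^ R.card) =
      (((R.finsuppAntidiag q).filter (fun l => ∀ i ∈ R, l i ≠ 0 ∧ e ∣ l i)).card : ℚ) := by
  classical
  rw [← Finset.prod_const, PowerSeries.coeff_prod]
  have : ∀ l : ι →₀ ℕ, (∏ i ∈ R, (PowerSeries.coeff (R := ℚ) (l i)) (Se e)) =
      if ∀ i ∈ R, l i ≠ 0 ∧ e ∣ l i then 1 else 0 := by
    intro l
    rw [← Finset.prod_boole]
    apply Finset.prod_congr rfl
    intro i _
    simp [Se, PowerSeries.coeff_mk]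
  rw [Finset.sum_congr rfl (fun l _ => this l), Finset.sum_boole]

section Period

variable {β : Type*}

def perSet (ψ : Equiv.Perm β) (M : Set (Set β)) (v : Set β → ℕ) (k : ℕ) : Prop :=
  ∀ I ∈ M, v (ψ ^ k • I) = v I

noncomputable def per (ψ : Equiv.Perm β) (M : Set (Set β)) (v : Set β → ℕ) : ℕ :=
  sInf {k | 0 < k ∧ perSet ψ M v k}

variable {ψ : Equiv.Perm β} {M : Set (Set β)} {v : Set β → ℕ} {d : ℕ}

lemma perSet_of_pow_eq_one (hψd : ψ ^ d = 1) : perSet ψ M v d := by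
  intro I hI; rw [hψd, one_smul]

lemma perSet_add (hinv : ∀ I ∈ M, ψ • I ∈ M) {a b : ℕ}
    (ha : perSet ψ M v a) (hb : perSet ψ M v b) : perSet ψ M v (a + b) := by
  intro I hI
  rw [← smul_pow_add, ha _ (smul_pow_mem hinv b I hI), hb _ hI]

lemma perSet_sub (hinv : ∀ I ∈ M, ψ • I ∈ M) {a b : ℕ} (hba : b ≤ a)
    (ha : perSet ψ M v a) (hb : perSet ψ M v b) : perSet ψ M v (a - b) := by
  intro I hI
  have h1 : v (ψ ^ b • (ψ ^ (a - b) • I)) = v (ψ ^ (a - b) • I) :=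
    hb _ (smul_pow_mem hinv (a - b) I hI)
  rw [smul_pow_add] at h1
  have h2 : b + (a - b) = a := by omega
  rw [h2] at h1
  rw [← h1, ha _ hI]

lemma per_spec (hd0 : 0 < d) (hψd : ψ ^ d = 1) :
    0 < per ψ M v ∧ perSet ψ M v (per ψ M v) := by
  have h : {k | 0 < k ∧ perSet ψ M v k}.Nonempty := ⟨d, hd0, perSet_of_pow_eq_one hψd⟩
  exact Nat.sInf_mem h

lemma per_dvd_of_perSet (hd0 : 0 < d) (hψd : ψ ^ d = 1)
    (hinv : ∀ I ∈ M, ψ • I ∈ M) : ∀ k, perSet ψ M v k → per ψ M v ∣ k := by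
  intro k
  induction k using Nat.strong_induction_on with
  | _ k ih =>
    intro hk
    rcases Nat.eq_zero_or_pos k with rfl | hk0
    · simp
    rcases Nat.lt_or_ge k (per ψ M v) with h | h
    · exfalso
      exact Nat.notMem_of_lt_sInf h ⟨hk0, hk⟩
    · have hp := per_spec (M := M) (v := v) hd0 hψd
      rcases Nat.eq_zero_or_pos (k - per ψ M v) with h0 | h0
      · have : k = per ψ M v := by omega
        rw [this]
      · have hsub : perSet ψ M v (k - per ψ M v) := perSet_sub hinv h hk hp.2
        have hdvd := ih (k - per ψ M v) (by omega) hsub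
        have : per ψ M v ∣ (k - per ψ M v) + per ψ M v := Nat.dvd_add hdvd dvd_rfl
        rwa [Nat.sub_add_cancel h] at this

lemma perSet_of_per_dvd (hd0 : 0 < d) (hψd : ψ ^ d = 1)
    (hinv : ∀ I ∈ M, ψ • I ∈ M) {k : ℕ} (hk : per ψ M v ∣ k) : perSet ψ M v k := by
  obtain ⟨c, rfl⟩ := hk
  induction c with
  | zero => intro I hI; simp
  | succ c ih =>
    have : per ψ M v * (c + 1) = per ψ M v * c + per ψ M v := by ring
    rw [this]
    exact perSet_add hinv ih (per_spec hd0 hψd).2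

lemma per_dvd_d (hd0 : 0 < d) (hψd : ψ ^ d = 1)
    (hinv : ∀ I ∈ M, ψ • I ∈ M) : per ψ M v ∣ d :=
  per_dvd_of_perSet hd0 hψd hinv d (perSet_of_pow_eq_one hψd)

end Period
noncomputable def vecDeg (m : ℕ) (N : Set (Set (ZMod m))) (a : Set (ZMod m) → ℕ) : ℕ :=
  ∑ᶠ I ∈ N, a I

def IsExpVec (m : ℕ) (N : Set (Set (ZMod m))) (a : Set (ZMod m) → ℕ) : Prop :=
  (∀ I ∈ N, 0 < a I) ∧ (∀ I ∉ N, a I = 0)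

def vecIso (m : ℕ) (N : Set (Set (ZMod m))) (a : Set (ZMod m) → ℕ) :
    Set (Equiv.Perm (ZMod m)) :=
  {φ | φ ∈ nestedStab m N ∧ ∀ I ∈ N, a (φ • I) = a I}

def vecOrbit (m : ℕ) (N : Set (Set (ZMod m))) (a : Set (ZMod m) → ℕ) :
    Set (Set (ZMod m) → ℕ) :=
  {b | ∃ φ ∈ nestedStab m N, b = fun J => a (φ⁻¹ • J)}

set_option maxHeartbeats 2000000 in
theorem hilbert_cyclic_isotropy (m d ℓ : ℕ) (hm : 3 ≤ m) (hdm : d ∣ m) (hd0 : 0 < d)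
    (N : Set (Set (ZMod m))) (hN : IsNested m N) (hne : N.Nonempty)
    (hstab : nestedStab m N = Subgroup.zpowers ((rot m) ^ (m / d)))
    (hcard : Nat.card (nestedStab m N) = d)
    (hl : ℓ ∣ d) (hl0 : 0 < ℓ) :
    (PowerSeries.mk fun q => if q = 0 then (0 : ℚ) else
      ({O : Set (Set (ZMod m) → ℕ) | ∃ v, IsExpVec m N v ∧ vecDeg m N v = q ∧
        (vecIso m N v).ncard = ℓ ∧ O = vecOrbit m N v}.ncard : ℚ))
    = PowerSeries.C (R := ℚ) ((ℓ : ℚ) / (d : ℚ)) *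
        ∑ r ∈ (d / ℓ).divisors,
          PowerSeries.C (R := ℚ) ((ArithmeticFunction.moebius r : ℤ) : ℚ) *
            (PowerSeries.X ^ (r * ℓ) *
              (1 - (PowerSeries.X : PowerSeries ℚ) ^ (r * ℓ))⁻¹) ^ (N.ncard / (r * ℓ)) := by
  classical
  haveI : NeZero m := ⟨by omega⟩
  set ρ : Equiv.Perm (ZMod m) := (rot m) ^ (m / d) with hρ
  have hmd0 : 0 < m / d := Nat.div_pos (Nat.le_of_dvd (by omega) hdm) hd0
  have hordρ : orderOf ρ = d := by rw [hstab, Nat.card_zpowers] at hcard; exact hcard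
  have hρd : ρ ^ d = 1 := by rw [← hordρ]; exact pow_orderOf_eq_one ρ
  have hρG : ∀ k : ℕ, ρ ^ k ∈ nestedStab m N := fun k => by
    rw [hstab]; exact Subgroup.mem_zpowers_iff.mpr ⟨(k : ℤ), zpow_natCast ρ k⟩
  have hGmem : ∀ φ ∈ nestedStab m N, ∀ I ∈ N, φ • I ∈ N := by
    intro φ hφ I hI
    have h2 : φ • N = N := hφ.2
    rw [← h2]
    exact Set.smul_mem_smul_set hI
  have hρinv : ∀ I ∈ N, ρ • I ∈ N := by
    intro I hI
    have := hGmem (ρ ^ 1) (hρG 1) I hI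
    rwa [pow_one] at this
  have hmemiff : ∀ (k : ℕ) (I : Set (ZMod m)), ρ ^ k • I ∈ N ↔ I ∈ N := by
    intro k I
    constructor
    · intro h
      have h1 : ρ ^ (k * (d - 1)) • (ρ ^ k • I) ∈ N :=
        smul_pow_mem hρinv _ _ h
      rw [smul_pow_add] at h1
      have h2 : k * (d - 1) + k = k * d := by
        cases d with
        | zero => omega
        | succ n =>
          simp only [Nat.succ_sub_one, Nat.mul_succ]
          try ring_nf
          try omega
      rw [h2] at h1
      have h3 : ρ ^ (k * d) • I = I := by
        rw [mul_comm, pow_mul, hρd, one_pow, one_smul]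
      rwa [h3] at h1
    · exact hGmem _ (hρG k) I
  have hrotpow : ∀ (j : ℕ) (x : ZMod m), ((rot m) ^ j) x = x + (j : ℕ) := by
    intro j
    induction j with
    | zero => intro x; simp
    | succ j ih =>
      intro x
      rw [pow_succ', Equiv.Perm.mul_apply, ih x]
      have h5 : ∀ y : ZMod m, (rot m) y = y + 1 := fun y => rfl
      rw [h5]
      push_cast; ring
  have hfreeI : ∀ I ∈ N, ∀ k : ℕ, ρ ^ k • I = I → d ∣ k := by
    intro I hI k hk
    obtain ⟨hne', hproper, hconn⟩ := hN.2.1 I hI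
    have him : ρ ^ k • I = (fun x => x + ((m / d * k : ℕ) : ZMod m)) '' I := by
      rw [hρ, ← pow_mul, perm_smul_set_s10]
      apply Set.image_congr
      intro x _
      exact hrotpow (m / d * k) x
    rw [him] at hk
    have hc0 : ((m / d * k : ℕ) : ZMod m) = 0 := no_translation hne' hproper hconn _ hk
    have hdvd : m ∣ m / d * k := (ZMod.natCast_eq_zero_iff _ m).mp hc0
    have hmdd : m / d * d = m := Nat.div_mul_cancel hdm
    have hdvd2 : m / d * d ∣ m / d * k := by rw [hmdd]; exact hdvd
    exact (Nat.mul_dvd_mul_iff_left hmd0).mp hdvd2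
  -- convert goal to coefficients
  ext q
  rw [PowerSeries.coeff_mk, PowerSeries.coeff_C_mul, map_sum]
  -- setup per-q structures
  have hNfin : N.Finite := hN.1
  set Nf : Finset (Set (ZMod m)) := hNfin.toFinset with hNf
  have hNcoe : (↑Nf : Set (Set (ZMod m))) = N := hNfin.coe_toFinset
  have hmemNf : ∀ I, I ∈ Nf ↔ I ∈ N := fun I => hNfin.mem_toFinset
  have hncard : N.ncard = Nf.card := Set.ncard_eq_toFinset_card N hNfin
  have hdeg : ∀ v : Set (ZMod m) → ℕ, vecDeg m N v = ∑ I ∈ Nf, v I := by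
    intro v; rw [vecDeg, ← hNcoe, finsum_mem_coe_finset]
  set tv : (Set (ZMod m) → ℕ) → ℕ := fun v => per ρ N v with htv
  have htv0 : ∀ v, 0 < tv v := fun v => (per_spec hd0 hρd).1
  have htvd : ∀ v, tv v ∣ d := fun v => per_dvd_d hd0 hρd hρinv
  have htv_iff : ∀ v k, perSet ρ N v k ↔ tv v ∣ k := by
    intro v k
    constructor
    · exact per_dvd_of_perSet hd0 hρd hρinv k
    · exact fun h => perSet_of_per_dvd hd0 hρd hρinv h
  have hVfin : {v : Set (ZMod m) → ℕ | IsExpVec m N v ∧ vecDeg m N v = q}.Finite := by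
    set ex : (Nf → Fin (q + 1)) → (Set (ZMod m) → ℕ) :=
      fun f I => if h : I ∈ Nf then (f ⟨I, h⟩ : ℕ) else 0 with hex
    apply Set.Finite.subset (Set.finite_range ex)
    rintro v ⟨hv1, hv2⟩
    have hvle : ∀ i : Nf, v i.1 < q + 1 := by
      intro i
      have h1 : v i.1 ≤ ∑ I ∈ Nf, v I :=
        Finset.single_le_sum (fun _ _ => Nat.zero_le _) i.2
      rw [← hdeg v, hv2] at h1
      omega
    refine ⟨fun i => ⟨v i.1, hvle i⟩, ?_⟩
    funext I
    by_cases h : I ∈ Nf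
    · simp [hex, h]
    · simp only [hex, dif_neg h]
      exact (hv1.2 I (by rwa [hmemNf] at h)).symm
  set Vf : Finset (Set (ZMod m) → ℕ) := hVfin.toFinset with hVf
  have hmemVf : ∀ v, v ∈ Vf ↔ IsExpVec m N v ∧ vecDeg m N v = q := fun v =>
    hVfin.mem_toFinset
  set W : Finset (Set (ZMod m) → ℕ) := Vf.filter (fun v => tv v = d / ℓ) with hW
  set Of : Finset (Set (Set (ZMod m) → ℕ)) := W.image (vecOrbit m N) with hOf
  set mv : ℕ → (Set (ZMod m) → ℕ) → (Set (ZMod m) → ℕ) :=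
    fun k v J => v (ρ ^ k • J) with hmv
  -- elements of the stabilizer are powers of ρ
  have hzpow : ∀ φ ∈ nestedStab m N, ∃ k, k < d ∧ φ = ρ ^ k := by
    intro φ hφ
    rw [hstab] at hφ
    obtain ⟨z, hz⟩ := hφ
    refine ⟨(z % d).toNat, ?_, ?_⟩
    · have h1 : z % d < d := Int.emod_lt_of_pos z (by exact_mod_cast hd0)
      omega
    · have h1 : 0 ≤ z % d := Int.emod_nonneg z (by exact_mod_cast hd0.ne')
      have h2 : ρ ^ ((z % d).toNat : ℤ) = ρ ^ (z % d) := by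
        rw [Int.toNat_of_nonneg h1]
      rw [← hz, ← zpow_natCast, h2, ← hordρ, zpow_mod_orderOf]
  -- vecIso computation
  have hiso : ∀ v, IsExpVec m N v → (vecIso m N v).ncard = d / tv v := by
    intro v hv
    have htvd' : tv v ∣ d := htvd v
    have htv0' : 0 < tv v := htv0 v
    have hkey : ∀ a, a < d / tv v → a * tv v < d := by
      intro a ha
      have h5 : (a + 1) * tv v ≤ (d / tv v) * tv v :=
        Nat.mul_le_mul_right _ (by omega)
      have h6 : (d / tv v) * tv v = d := Nat.div_mul_cancel htvd'
      have h7 : (a + 1) * tv v = a * tv v + tv v := by ring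
      omega
    have hset : vecIso m N v =
        ↑((Finset.range (d / tv v)).image fun j => ρ ^ (j * tv v)) := by
      ext φ
      simp only [Finset.coe_image, Set.mem_image, Finset.coe_range, Set.mem_Iio]
      constructor
      · rintro ⟨hφG, hφP⟩
        obtain ⟨k, hk, rfl⟩ := hzpow φ hφG
        have hP : perSet ρ N v k := fun I hI => hφP I hI
        have hdvd : tv v ∣ k := (htv_iff v k).mp hP
        obtain ⟨j, rfl⟩ := hdvd
        refine ⟨j, ?_, by rw [mul_comm]⟩
        have h2 : tv v * (d / tv v) = d := Nat.mul_div_cancel' htvd'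
        by_contra hj
        push_neg at hj
        have h3 : tv v * (d / tv v) ≤ tv v * j := Nat.mul_le_mul_left _ hj
        omega
      · rintro ⟨j, hj, rfl⟩
        exact ⟨hρG _, fun I hI =>
          perSet_of_per_dvd hd0 hρd hρinv (dvd_mul_left (tv v) j) I hI⟩
    rw [hset, Set.ncard_coe_finset, Finset.card_image_of_injOn, Finset.card_range]
    intro j hj j' hj' hjj
    simp only [Finset.coe_range, Set.mem_Iio] at hj hj'
    have h2 := pow_inj_mod.mp hjj
    rw [hordρ, Nat.mod_eq_of_lt (hkey j hj), Nat.mod_eq_of_lt (hkey j' hj')] at h2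
    exact Nat.eq_of_mul_eq_mul_right htv0' h2
  have hiso_iff : ∀ v, IsExpVec m N v → ((vecIso m N v).ncard = ℓ ↔ tv v = d / ℓ) := by
    intro v hv
    rw [hiso v hv]
    constructor
    · intro h
      rw [← h, Nat.div_div_self (htvd v) hd0.ne']
    · intro h
      rw [h, Nat.div_div_self hl hd0.ne']
  -- claim 3 : the LHS set is ↑Of
  have claim3 : {O : Set (Set (ZMod m) → ℕ) | ∃ v, IsExpVec m N v ∧ vecDeg m N v = q ∧
      (vecIso m N v).ncard = ℓ ∧ O = vecOrbit m N v} = ↑Of := by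
    ext O
    simp only [Set.mem_setOf_eq, hOf, Finset.coe_image, Set.mem_image, Finset.mem_coe,
      hW, Finset.mem_filter]
    constructor
    · rintro ⟨v, hv1, hv2, hv3, rfl⟩
      exact ⟨v, ⟨(hmemVf v).mpr ⟨hv1, hv2⟩, (hiso_iff v hv1).mp hv3⟩, rfl⟩
    · rintro ⟨v, ⟨hv1, hv2⟩, rfl⟩
      obtain ⟨hv3, hv4⟩ := (hmemVf v).mp hv1
      exact ⟨v, hv3, hv4, (hiso_iff v hv3).mpr hv2, rfl⟩
  -- claim 4 : orbit counting
  -- mv machinery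
  have hmv_add : ∀ (a b : ℕ) (v : Set (ZMod m) → ℕ), mv a (mv b v) = mv (a + b) v := by
    intro a b v
    funext J
    show v (ρ ^ b • (ρ ^ a • J)) = v (ρ ^ (a + b) • J)
    rw [smul_pow_add, Nat.add_comm]
  have hmv_zero : ∀ v : Set (ZMod m) → ℕ, mv 0 v = v := by
    intro v; funext J
    show v (ρ ^ 0 • J) = v J
    rw [pow_zero, one_smul]
  have hmv_dmul : ∀ (j : ℕ) (v : Set (ZMod m) → ℕ), mv (d * j) v = v := by
    intro j v
    funext J
    show v (ρ ^ (d * j) • J) = v J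
    rw [pow_mul, hρd, one_pow, one_smul]
  have hmv_mod : ∀ (k : ℕ) (v : Set (ZMod m) → ℕ), mv k v = mv (k % d) v := by
    intro k v
    conv_lhs => rw [← Nat.mod_add_div k d]
    rw [← hmv_add, hmv_dmul]
  have hd_arith : ∀ k j : ℕ, j + k * (d - 1) + k = j + k * d := by
    intro k j
    cases d with
    | zero => omega
    | succ n =>
      simp only [Nat.succ_sub_one, Nat.mul_succ]
      try ring_nf
      try omega
  have hd_arith2 : ∀ k : ℕ, k * (d - 1) + k = d * k := by
    intro k
    have h := hd_arith k 0
    rw [mul_comm d k]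
    omega
  have horbit : ∀ v : Set (ZMod m) → ℕ,
      vecOrbit m N v = ↑((Finset.range d).image fun k => mv k v) := by
    intro v
    ext b
    simp only [Finset.coe_image, Set.mem_image, Finset.coe_range, Set.mem_Iio, vecOrbit,
      Set.mem_setOf_eq]
    constructor
    · rintro ⟨φ, hφ, rfl⟩
      obtain ⟨k, hk, hkeq⟩ := hzpow φ⁻¹ (inv_mem hφ)
      refine ⟨k, hk, ?_⟩
      funext J
      show v (ρ ^ k • J) = v (φ⁻¹ • J)
      rw [hkeq]
    · rintro ⟨k, hk, rfl⟩
      refine ⟨(ρ ^ k)⁻¹, inv_mem (hρG k), ?_⟩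
      funext J
      show v (ρ ^ k • J) = v (((ρ ^ k)⁻¹)⁻¹ • J)
      rw [inv_inv]
  have horb_eq : ∀ (k : ℕ) (v : Set (ZMod m) → ℕ),
      vecOrbit m N (mv k v) = vecOrbit m N v := by
    intro k v
    rw [horbit, horbit]
    norm_cast
    ext b
    simp only [Finset.mem_image, Finset.mem_range]
    constructor
    · rintro ⟨j, hj, rfl⟩
      refine ⟨(j + k) % d, Nat.mod_lt _ hd0, ?_⟩
      rw [← hmv_mod, ← hmv_add]
    · rintro ⟨j, hj, rfl⟩
      refine ⟨(j + k * (d - 1)) % d, Nat.mod_lt _ hd0, ?_⟩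
      rw [hmv_add, hmv_mod, Nat.mod_add_mod, hd_arith k j, Nat.add_mul_mod_self_right,
        ← hmv_mod]
  have hmv_fix : ∀ v : Set (ZMod m) → ℕ, IsExpVec m N v → ∀ j, perSet ρ N v j →
      mv j v = v := by
    intro v hv j hP
    funext J
    show v (ρ ^ j • J) = v J
    by_cases hJ : J ∈ N
    · exact hP J hJ
    · rw [hv.2 J hJ, hv.2 _ (fun hc => hJ ((hmemiff j J).mp hc))]
  have hmvVf : ∀ v ∈ Vf, ∀ k : ℕ, mv k v ∈ Vf ∧ tv (mv k v) = tv v := by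
    intro v hv k
    obtain ⟨hv1, hv2⟩ := (hmemVf v).mp hv
    have hPfwd : ∀ (k j : ℕ) (w : Set (ZMod m) → ℕ),
        perSet ρ N w j → perSet ρ N (mv k w) j := by
      intro k j w hP I hI
      show w (ρ ^ k • (ρ ^ j • I)) = w (ρ ^ k • I)
      rw [smul_pow_add, Nat.add_comm, ← smul_pow_add]
      exact hP _ ((hmemiff k I).mpr hI)
    have hmv_inv : ∀ (k : ℕ) (w : Set (ZMod m) → ℕ), mv (k * (d - 1)) (mv k w) = w := by
      intro k w
      rw [hmv_add, hd_arith2 k, hmv_dmul]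
    have hPiff : ∀ j, perSet ρ N (mv k v) j ↔ perSet ρ N v j := by
      intro j
      constructor
      · intro hP
        have := hPfwd (k * (d - 1)) j _ hP
        rwa [hmv_inv] at this
      · exact hPfwd k j v
    constructor
    · rw [hmemVf]
      constructor
      · constructor
        · intro I hI
          exact hv1.1 _ ((hmemiff k I).mpr hI)
        · intro I hI
          exact hv1.2 _ (fun hc => hI ((hmemiff k I).mp hc))
      · rw [hdeg] at hv2 ⊢
        rw [← hv2]
        refine Finset.sum_nbij' (fun I => ρ ^ k • I) (fun I => ρ ^ (k * (d - 1)) • I)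
          ?_ ?_ ?_ ?_ ?_
        · intro I hI
          rw [hmemNf] at hI ⊢
          exact (hmemiff k I).mpr hI
        · intro I hI
          rw [hmemNf] at hI ⊢
          exact (hmemiff _ I).mpr hI
        · intro I _
          show ρ ^ (k * (d - 1)) • (ρ ^ k • I) = I
          rw [smul_pow_add, hd_arith2 k, pow_mul, hρd, one_pow, one_smul]
        · intro I _
          show ρ ^ k • (ρ ^ (k * (d - 1)) • I) = I
          rw [smul_pow_add]
          have h2 : k + k * (d - 1) = d * k := by have := hd_arith2 k; omega
          rw [h2, pow_mul, hρd, one_pow, one_smul]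
        · intro I _
          rfl
    · show per ρ N (mv k v) = per ρ N v
      unfold per
      congr 1
      ext j
      simp only [Set.mem_setOf_eq]
      rw [hPiff j]
  -- claim 4 : orbit counting
  have claim4 : (W.card : ℚ) = (Of.card : ℚ) * ((d / ℓ : ℕ) : ℚ) := by
    have hdl0 : 0 < d / ℓ := Nat.div_pos (Nat.le_of_dvd hd0 hl) hl0
    have hcnt : W.card = Of.card * (d / ℓ) := by
      rw [hOf, Finset.card_eq_sum_card_image (vecOrbit m N) W]
      have hfib : ∀ O ∈ W.image (vecOrbit m N),
          (W.filter fun w => vecOrbit m N w = O).card = d / ℓ := by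
        intro O hO
        obtain ⟨v, hvW, rfl⟩ := Finset.mem_image.mp hO
        obtain ⟨hvVf, htvv⟩ := Finset.mem_filter.mp hvW
        obtain ⟨hv1, hv2⟩ := (hmemVf v).mp hvVf
        set t := tv v with ht
        have hfeq : W.filter (fun w => vecOrbit m N w = vecOrbit m N v)
            = (Finset.range t).image (fun b => mv b v) := by
          ext w
          simp only [Finset.mem_filter, Finset.mem_image, Finset.mem_range]
          constructor
          · rintro ⟨hwW, hworb⟩
            have hwv : w ∈ vecOrbit m N v := by
              rw [← hworb, horbit]
              norm_cast
              simp only [Finset.mem_image, Finset.mem_range]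
              exact ⟨0, hd0, hmv_zero w⟩
            rw [horbit] at hwv
            norm_cast at hwv
            simp only [Finset.mem_image, Finset.mem_range] at hwv
            obtain ⟨k, hk, rfl⟩ := hwv
            refine ⟨k % t, Nat.mod_lt _ (htv0 v), ?_⟩
            show mv (k % t) v = mv k v
            conv_rhs => rw [← Nat.mod_add_div k t]
            rw [← hmv_add, hmv_fix v hv1 (t * (k / t))
              ((htv_iff v _).mpr (dvd_mul_right t (k / t)))]
          · rintro ⟨b, hb, rfl⟩
            obtain ⟨hmem, htveq⟩ := hmvVf v hvVf b
            exact ⟨Finset.mem_filter.mpr ⟨hmem, htveq.trans htvv⟩, horb_eq b v⟩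
        rw [hfeq, Finset.card_image_of_injOn, Finset.card_range, ← htvv]
        intro b hb b' hb' hbb0
        have hbb : mv b v = mv b' v := hbb0
        simp only [Finset.coe_range, Set.mem_Iio] at hb hb'
        rcases le_total b b' with hle | hle
        · by_contra hne'
          have h1 : mv (b' * (d - 1)) (mv b v) = mv (b' * (d - 1)) (mv b' v) := by
            rw [hbb]
          rw [hmv_add, hmv_add] at h1
          have h2 : mv (b' * (d - 1) + b') v = v := by
            rw [hd_arith2 b', hmv_dmul]
          rw [h2] at h1
          have hP : perSet ρ N v (b' * (d - 1) + b) := by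
            intro I hI
            exact congrFun h1 I
          have hdvd1 : t ∣ b' * (d - 1) + b := (htv_iff v _).mp hP
          have hdvd2 : t ∣ b' * d := Dvd.dvd.mul_left (htvd v) b'
          have harith : b' * (d - 1) + b' = b' * d := by have := hd_arith b' 0; omega
          have hdvd3 : t ∣ b' * d - (b' * (d - 1) + b) := Nat.dvd_sub hdvd2 hdvd1
          have heq2 : b' * d - (b' * (d - 1) + b) = b' - b := by omega
          rw [heq2] at hdvd3
          have := Nat.eq_zero_of_dvd_of_lt hdvd3 (by omega)
          omega
        · by_contra hne'
          have h1 : mv (b * (d - 1)) (mv b' v) = mv (b * (d - 1)) (mv b v) := by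
            rw [hbb]
          rw [hmv_add, hmv_add] at h1
          have h2 : mv (b * (d - 1) + b) v = v := by
            rw [hd_arith2 b, hmv_dmul]
          rw [h2] at h1
          have hP : perSet ρ N v (b * (d - 1) + b') := by
            intro I hI
            exact congrFun h1 I
          have hdvd1 : t ∣ b * (d - 1) + b' := (htv_iff v _).mp hP
          have hdvd2 : t ∣ b * d := Dvd.dvd.mul_left (htvd v) b
          have harith : b * (d - 1) + b = b * d := by have := hd_arith b 0; omega
          have hdvd3 : t ∣ b * d - (b * (d - 1) + b') := Nat.dvd_sub hdvd2 hdvd1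
          have heq2 : b * d - (b * (d - 1) + b') = b - b' := by omega
          rw [heq2] at hdvd3
          have := Nat.eq_zero_of_dvd_of_lt hdvd3 (by omega)
          omega
      rw [Finset.sum_congr rfl hfib, Finset.sum_const, smul_eq_mul]
    rw [hcnt]
    push_cast
    ring
  have claim1 : ∀ e : ℕ, 0 < e → e ∣ d →
      ((PowerSeries.coeff (R := ℚ) q) (Se e ^ (N.ncard / e)) : ℚ)
        = ((Vf.filter fun v => perSet ρ N v (d / e)).card : ℚ) := by
    intro e he0 hed
    set t := d / e with htdef
    have htd : t * e = d := Nat.div_mul_cancel hed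
    have ht0 : 0 < t := Nat.div_pos (Nat.le_of_dvd hd0 hed) he0
    set ψ := ρ ^ t with hψdef
    have hψe : ψ ^ e = 1 := by rw [hψdef, ← pow_mul, htd, hρd]
    have hψinv : ∀ I ∈ N, ψ • I ∈ N := fun I hI => hGmem _ (hρG t) I hI
    have hψper : ∀ I ∈ N, ψ ^ e • I = I := fun I hI => by rw [hψe, one_smul]
    have hψfree : ∀ I ∈ N, ∀ k, ψ ^ k • I = I → e ∣ k := by
      intro I hI k hk
      rw [hψdef, ← pow_mul] at hk
      have h2 := hfreeI I hI (t * k) hk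
      have h3 : t * e ∣ t * k := by rw [htd]; exact h2
      exact (Nat.mul_dvd_mul_iff_left ht0).mp h3
    obtain ⟨R, hRsub, hdec⟩ :=
      orbit_decomp ψ e he0 N.ncard N hNfin le_rfl hψinv hψper hψfree
    have hPt : ∀ v : Set (ZMod m) → ℕ, perSet ρ N v t →
        ∀ (k : ℕ), ∀ I ∈ N, v (ψ ^ k • I) = v I := by
      intro v hP k I hI
      rw [hψdef, ← pow_mul]
      exact perSet_of_per_dvd hd0 hρd hρinv
        (dvd_trans ((htv_iff v t).mp hP) (dvd_mul_right t k)) I hI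
    choose rep hrep using fun I (hI : I ∈ N) => (hdec I hI).exists
    have huniq : ∀ I (hI : I ∈ N), ∀ p : Set (ZMod m) × ℕ,
        (p.1 ∈ R ∧ p.2 < e) ∧ I = ψ ^ p.2 • p.1 → p = rep I hI := by
      intro I hI p hp
      exact (hdec I hI).unique hp (hrep I hI)
    have hrep_self : ∀ r (hr : r ∈ R), rep r (hRsub hr) = (r, 0) := by
      intro r hr
      exact (huniq r (hRsub hr) (r, 0) ⟨⟨hr, he0⟩, by rw [pow_zero, one_smul]⟩).symm
    -- bijection between Nf and R ×ˢ range e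
    have hmapsto : ∀ p ∈ R ×ˢ Finset.range e, ψ ^ p.2 • p.1 ∈ Nf := by
      intro p hp
      rw [Finset.mem_product] at hp
      rw [hmemNf]
      exact smul_pow_mem hψinv _ _ (hRsub hp.1)
    have hinj : ∀ p ∈ R ×ˢ Finset.range e, ∀ p' ∈ R ×ˢ Finset.range e,
        ψ ^ p.2 • p.1 = ψ ^ p'.2 • p'.1 → p = p' := by
      intro p hp p' hp' heq
      rw [Finset.mem_product, Finset.mem_range] at hp hp'
      have hIN : ψ ^ p.2 • p.1 ∈ N := by
        rw [← hmemNf]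
        exact hmapsto p (by rw [Finset.mem_product, Finset.mem_range]; exact hp)
      have h1 := huniq _ hIN p ⟨⟨hp.1, hp.2⟩, rfl⟩
      have h2 := huniq _ hIN p' ⟨⟨hp'.1, hp'.2⟩, heq⟩
      rw [h1, h2]
    have hsurj : ∀ I ∈ Nf, ∃ p, ∃ hp : p ∈ R ×ˢ Finset.range e, ψ ^ p.2 • p.1 = I := by
      intro I hI
      rw [hmemNf] at hI
      refine ⟨rep I hI, ?_, ((hrep I hI).2).symm⟩
      rw [Finset.mem_product, Finset.mem_range]
      exact (hrep I hI).1
    have hprod_card : (R ×ˢ Finset.range e).card = Nf.card :=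
      Finset.card_bij (fun p _ => ψ ^ p.2 • p.1) hmapsto hinj hsurj
    have hNRe : Nf.card = R.card * e := by
      rw [← hprod_card, Finset.card_product, Finset.card_range]
    have hRcard : R.card = N.ncard / e := by
      rw [hncard, hNRe, Nat.mul_div_cancel _ he0]
    have hsum_bij : ∀ w : Set (ZMod m) → ℕ,
        ∑ I ∈ Nf, w I = ∑ p ∈ R ×ˢ Finset.range e, w (ψ ^ p.2 • p.1) :=
      fun w => (Finset.sum_bij (fun p _ => ψ ^ p.2 • p.1) hmapsto hinj hsurj
        (fun p _ => rfl)).symm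
    rw [← hRcard, coeff_Se_pow]
    norm_cast
    symm
    -- the main bijection on vectors
    set vl : (Set (ZMod m) → ℕ) → (Set (ZMod m) →₀ ℕ) :=
      fun v => Finsupp.onFinset R (fun r => if r ∈ R then e * v r else 0)
        (fun r h => by by_contra hc; exact h (if_neg hc)) with hvldef
    have hvl_apply : ∀ v r, r ∈ R → vl v r = e * v r := by
      intro v r hr
      simp only [hvldef, Finsupp.onFinset_apply, if_pos hr]
    have hvl_apply' : ∀ v r, r ∉ R → vl v r = 0 := by
      intro v r hr
      simp only [hvldef, Finsupp.onFinset_apply, if_neg hr]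
    apply Finset.card_bij (fun v _ => vl v)
    · -- maps to
      intro v hv
      obtain ⟨hvVf, hvP⟩ := Finset.mem_filter.mp hv
      obtain ⟨hv1, hv2⟩ := (hmemVf v).mp hvVf
      simp only [Finset.mem_filter, Finset.mem_finsuppAntidiag]
      have hsq : ∑ r ∈ R, vl v r = q := by
        rw [Finset.sum_congr rfl (fun r hr => hvl_apply v r hr)]
        have h4 : ∑ I ∈ Nf, v I = q := by rw [← hdeg v]; exact hv2
        rw [hsum_bij v, Finset.sum_product] at h4
        calc ∑ r ∈ R, e * v r
            = ∑ r ∈ R, ∑ _k ∈ Finset.range e, v r := by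
              refine Finset.sum_congr rfl fun r _ => ?_
              rw [Finset.sum_const, Finset.card_range, smul_eq_mul]
          _ = ∑ r ∈ R, ∑ k ∈ Finset.range e, v (ψ ^ k • r) := by
              refine Finset.sum_congr rfl fun r hr => Finset.sum_congr rfl fun k _ => ?_
              exact (hPt v hvP k r (hRsub hr)).symm
          _ = q := h4
      refine ⟨⟨hsq, Finsupp.support_onFinset_subset⟩, ?_⟩
      intro i hi
      rw [hvl_apply v i hi]
      constructor
      · exact Nat.mul_ne_zero he0.ne' (hv1.1 i (hRsub hi)).ne'
      · exact dvd_mul_right e _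
    · -- injective
      intro v hv v' hv' heq
      obtain ⟨hvVf, hvP⟩ := Finset.mem_filter.mp hv
      obtain ⟨hv'Vf, hv'P⟩ := Finset.mem_filter.mp hv'
      obtain ⟨hv1, hv2⟩ := (hmemVf v).mp hvVf
      obtain ⟨hv1', hv2'⟩ := (hmemVf v').mp hv'Vf
      funext I
      by_cases hI : I ∈ N
      · obtain ⟨⟨hr1, hr2⟩, hIe⟩ := hrep I hI
        have hvr : v ((rep I hI).1) = v' ((rep I hI).1) := by
          have h6 : vl v ((rep I hI).1) = vl v' ((rep I hI).1) := by rw [heq]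
          rw [hvl_apply v _ hr1, hvl_apply v' _ hr1] at h6
          exact Nat.eq_of_mul_eq_mul_left he0 h6
        calc v I = v (ψ ^ (rep I hI).2 • (rep I hI).1) := by rw [← hIe]
          _ = v ((rep I hI).1) := hPt v hvP _ _ (hRsub hr1)
          _ = v' ((rep I hI).1) := hvr
          _ = v' (ψ ^ (rep I hI).2 • (rep I hI).1) := (hPt v' hv'P _ _ (hRsub hr1)).symm
          _ = v' I := by rw [← hIe]
      · rw [hv1.2 I hI, hv1'.2 I hI]
    · -- surjective
      intro l hl
      simp only [Finset.mem_filter, Finset.mem_finsuppAntidiag] at hl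
      obtain ⟨⟨hlsum, hlsupp⟩, hl2⟩ := hl
      set v0 : Set (ZMod m) → ℕ :=
        fun I => if h : I ∈ N then l ((rep I h).1) / e else 0 with hv0def
      have hvI : ∀ I (hI : I ∈ N), v0 I = l ((rep I hI).1) / e := by
        intro I hI
        show (if h : I ∈ N then l ((rep I h).1) / e else 0) = l ((rep I hI).1) / e
        rw [dif_pos hI]
      have hvr : ∀ r, r ∈ R → v0 r = l r / e := by
        intro r hr
        rw [hvI r (hRsub hr), hrep_self r hr]
      have hvpos : ∀ I ∈ N, 0 < v0 I := by
        intro I hI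
        rw [hvI I hI]
        obtain ⟨h8, c, hc⟩ := hl2 _ ((hrep I hI).1).1
        rw [hc, Nat.mul_div_cancel_left _ he0]
        rcases Nat.eq_zero_or_pos c with rfl | h9
        · rw [hc] at h8; simp at h8
        · exact h9
      have hrep_psi : ∀ I (hI : I ∈ N), (rep (ψ • I) (hψinv I hI)).1 = (rep I hI).1 := by
        intro I hI
        obtain ⟨⟨hr1, hr2⟩, hIe⟩ := hrep I hI
        by_cases hke : (rep I hI).2 + 1 < e
        · have h10 : ψ • I = ψ ^ ((rep I hI).2 + 1) • (rep I hI).1 := by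
            conv_lhs => rw [hIe]
            rw [show ψ • (ψ ^ (rep I hI).2 • (rep I hI).1)
                = ψ ^ 1 • (ψ ^ (rep I hI).2 • (rep I hI).1) by rw [pow_one]]
            rw [smul_pow_add, Nat.add_comm]
          have h11 := huniq (ψ • I) (hψinv I hI) ((rep I hI).1, (rep I hI).2 + 1)
            ⟨⟨hr1, hke⟩, h10⟩
          rw [← h11]
        · have h10 : ψ • I = ψ ^ 0 • (rep I hI).1 := by
            rw [pow_zero, one_smul]
            conv_lhs => rw [hIe]
            rw [show ψ • (ψ ^ (rep I hI).2 • (rep I hI).1)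
                = ψ ^ 1 • (ψ ^ (rep I hI).2 • (rep I hI).1) by rw [pow_one]]
            rw [smul_pow_add]
            have h12 : 1 + (rep I hI).2 = e := by omega
            rw [h12]
            exact hψper _ (hRsub hr1)
          have h11 := huniq (ψ • I) (hψinv I hI) ((rep I hI).1, 0) ⟨⟨hr1, he0⟩, h10⟩
          rw [← h11]
      have hP : perSet ρ N v0 t := by
        intro I hI
        show v0 (ψ • I) = v0 I
        rw [hvI _ (hψinv I hI), hvI I hI, hrep_psi I hI]
      have hdegv : vecDeg m N v0 = q := by
        rw [hdeg, hsum_bij v0, Finset.sum_product]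
        calc ∑ r ∈ R, ∑ k ∈ Finset.range e, v0 (ψ ^ k • r)
            = ∑ r ∈ R, ∑ _k ∈ Finset.range e, l r / e := by
              refine Finset.sum_congr rfl fun r hr => Finset.sum_congr rfl fun k _ => ?_
              rw [hPt v0 hP k r (hRsub hr), hvr r hr]
          _ = ∑ r ∈ R, e * (l r / e) := by
              refine Finset.sum_congr rfl fun r _ => ?_
              rw [Finset.sum_const, Finset.card_range, smul_eq_mul]
          _ = ∑ r ∈ R, l r := by
              refine Finset.sum_congr rfl fun r hr => ?_
              exact Nat.mul_div_cancel' (hl2 r hr).2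
          _ = q := hlsum
      refine ⟨v0, Finset.mem_filter.mpr ⟨(hmemVf v0).mpr ⟨⟨hvpos, ?_⟩, hdegv⟩, hP⟩, ?_⟩
      · intro I hI
        show (if h : I ∈ N then l ((rep I h).1) / e else 0) = 0
        rw [dif_neg hI]
      · apply Finsupp.ext
        intro i
        by_cases hi : i ∈ R
        · rw [hvl_apply v0 i hi, hvr i hi, Nat.mul_div_cancel' (hl2 i hi).2]
        · rw [hvl_apply' v0 i hi]
          exact (Finsupp.notMem_support_iff.mp (fun hc => hi (hlsupp hc))).symm
  have hdl0 : 0 < d / ℓ := Nat.div_pos (Nat.le_of_dvd hd0 hl) hl0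
  have claim2 : ∑ r ∈ (d / ℓ).divisors,
      ((ArithmeticFunction.moebius r : ℤ) : ℚ) *
        ((Vf.filter fun v => perSet ρ N v (d / (r * ℓ))).card : ℚ) = (W.card : ℚ) := by
    have hswap : ∑ r ∈ (d / ℓ).divisors,
        ((ArithmeticFunction.moebius r : ℤ) : ℚ) *
          ((Vf.filter fun v => perSet ρ N v (d / (r * ℓ))).card : ℚ)
        = ∑ v ∈ Vf, ∑ r ∈ (d / ℓ).divisors,
            ((ArithmeticFunction.moebius r : ℤ) : ℚ) *
              (if perSet ρ N v (d / (r * ℓ)) then (1 : ℚ) else 0) := by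
      rw [← Finset.sum_comm]
      refine Finset.sum_congr rfl ?_
      intro r _
      rw [← Finset.sum_boole, Finset.mul_sum]
    rw [hswap]
    have hinner : ∀ v ∈ Vf, (∑ r ∈ (d / ℓ).divisors,
        ((ArithmeticFunction.moebius r : ℤ) : ℚ) *
          (if perSet ρ N v (d / (r * ℓ)) then (1 : ℚ) else 0))
        = if tv v = d / ℓ then (1 : ℚ) else 0 := by
      intro v _
      have hrw2 : ∀ r ∈ (d / ℓ).divisors,
          ((ArithmeticFunction.moebius r : ℤ) : ℚ) *
            (if perSet ρ N v (d / (r * ℓ)) then (1 : ℚ) else 0)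
          = if tv v ∣ d / (r * ℓ) then ((ArithmeticFunction.moebius r : ℤ) : ℚ) else 0 := by
        intro r _
        by_cases h : perSet ρ N v (d / (r * ℓ))
        · rw [if_pos h, if_pos ((htv_iff _ _).mp h), mul_one]
        · rw [if_neg h, if_neg (fun hc => h ((htv_iff _ _).mpr hc)), mul_zero]
      rw [Finset.sum_congr rfl hrw2, ← Finset.sum_filter]
      by_cases hB : tv v * ℓ ∣ d
      · have hfeq : (d / ℓ).divisors.filter (fun r => tv v ∣ d / (r * ℓ))
            = (d / (tv v * ℓ)).divisors := by
          ext r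
          simp only [Finset.mem_filter, Nat.mem_divisors]
          constructor
          · rintro ⟨⟨hr1, hr2⟩, hr3⟩
            have hrl : ℓ * r ∣ d := (Nat.dvd_div_iff_mul_dvd hl).mp hr1
            have hrl' : r * ℓ ∣ d := by rwa [mul_comm] at hrl
            have h4 : (r * ℓ) * tv v ∣ d := (Nat.dvd_div_iff_mul_dvd hrl').mp hr3
            refine ⟨(Nat.dvd_div_iff_mul_dvd hB).mpr ?_, ?_⟩
            · have h5 : (tv v * ℓ) * r = (r * ℓ) * tv v := by ring
              rwa [h5]
            · have h6 : 0 < d / (tv v * ℓ) :=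
                Nat.div_pos (Nat.le_of_dvd hd0 hB) (Nat.mul_pos (htv0 v) hl0)
              omega
          · rintro ⟨hr1, hr2⟩
            have h4 : (tv v * ℓ) * r ∣ d := (Nat.dvd_div_iff_mul_dvd hB).mp hr1
            have h5 : r * ℓ ∣ (tv v * ℓ) * r := by
              have : (tv v * ℓ) * r = (r * ℓ) * tv v := by ring
              rw [this]
              exact dvd_mul_right _ _
            have hrl' : r * ℓ ∣ d := dvd_trans h5 h4
            refine ⟨⟨(Nat.dvd_div_iff_mul_dvd hl).mpr (by rwa [mul_comm ℓ r]), hdl0.ne'⟩,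
              (Nat.dvd_div_iff_mul_dvd hrl').mpr ?_⟩
            have h6 : (r * ℓ) * tv v = (tv v * ℓ) * r := by ring
            rwa [h6]
        rw [hfeq]
        have hmob := sum_moebius_divisors (d / (tv v * ℓ))
        have hcond : (d / (tv v * ℓ) = 1) ↔ (tv v = d / ℓ) := by
          constructor
          · intro h
            have h2 : d / (tv v * ℓ) * (tv v * ℓ) = d := Nat.div_mul_cancel hB
            rw [h, one_mul] at h2
            rw [← h2, Nat.mul_div_cancel _ hl0]
          · intro h
            rw [h, Nat.div_mul_cancel hl, Nat.div_self hd0]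
        have hcast : (∑ r ∈ (d / (tv v * ℓ)).divisors,
            ((ArithmeticFunction.moebius r : ℤ) : ℚ))
            = ((∑ r ∈ (d / (tv v * ℓ)).divisors,
                ArithmeticFunction.moebius r : ℤ) : ℚ) := by
          push_cast
          ring
        rw [hcast, hmob]
        by_cases hc : tv v = d / ℓ
        · rw [if_pos hc, if_pos (hcond.mpr hc)]
          norm_num
        · rw [if_neg hc, if_neg (fun h => hc (hcond.mp h))]
          norm_num
      · have hfeq : (d / ℓ).divisors.filter (fun r => tv v ∣ d / (r * ℓ)) = ∅ := by
          rw [Finset.eq_empty_iff_forall_notMem]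
          intro r hr
          obtain ⟨hrd, hr3⟩ := Finset.mem_filter.mp hr
          obtain ⟨hr1, hr2⟩ := Nat.mem_divisors.mp hrd
          have hrl : ℓ * r ∣ d := (Nat.dvd_div_iff_mul_dvd hl).mp hr1
          have hrl' : r * ℓ ∣ d := by rwa [mul_comm] at hrl
          have h4 : (r * ℓ) * tv v ∣ d := (Nat.dvd_div_iff_mul_dvd hrl').mp hr3
          apply hB
          have h5 : tv v * ℓ ∣ (r * ℓ) * tv v := by
            have : (r * ℓ) * tv v = (tv v * ℓ) * r := by ring
            rw [this]
            exact dvd_mul_right _ _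
          exact dvd_trans h5 h4
        rw [hfeq, Finset.sum_empty, if_neg ?_]
        intro hc
        apply hB
        rw [hc, Nat.div_mul_cancel hl]
    rw [Finset.sum_congr rfl hinner, Finset.sum_boole]
  -- assemble
  have hrw : ∀ r ∈ (d / ℓ).divisors,
      (PowerSeries.coeff (R := ℚ) q) (PowerSeries.C (R := ℚ) ((ArithmeticFunction.moebius r : ℤ) : ℚ) *
        (PowerSeries.X ^ (r * ℓ) *
          (1 - (PowerSeries.X : PowerSeries ℚ) ^ (r * ℓ))⁻¹) ^ (N.ncard / (r * ℓ)))
      = ((ArithmeticFunction.moebius r : ℤ) : ℚ) *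
          ((Vf.filter fun v => perSet ρ N v (d / (r * ℓ))).card : ℚ) := by
    intro r hr
    have hr1 : 1 ≤ r := Nat.pos_of_mem_divisors hr
    have he0 : 0 < r * ℓ := by positivity
    have hed : r * ℓ ∣ d := by
      have h2 : r ∣ d / ℓ := (Nat.mem_divisors.mp hr).1
      have h3 := (Nat.dvd_div_iff_mul_dvd hl).mp h2
      rwa [mul_comm] at h3
    rw [geom_eq_Se he0, PowerSeries.coeff_C_mul, claim1 _ he0 hed]
  rw [Finset.sum_congr rfl hrw, claim2]
  -- LHS coefficient
  rw [claim3, Set.ncard_coe_finset]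
  have hq0 : q = 0 → Of.card = 0 := by
    intro hq
    have hVf0 : Vf = ∅ := by
      rw [Finset.eq_empty_iff_forall_notMem]
      intro v hv
      obtain ⟨hv1, hv2⟩ := (hmemVf v).mp hv
      obtain ⟨I₀, hI₀⟩ := hne
      have h1 : 0 < v I₀ := hv1.1 I₀ hI₀
      have h2 : v I₀ ≤ ∑ I ∈ Nf, v I :=
        Finset.single_le_sum (fun _ _ => Nat.zero_le _) ((hmemNf I₀).mpr hI₀)
      rw [← hdeg v, hv2, hq] at h2
      omega
    rw [hOf, hW, hVf0, Finset.filter_empty, Finset.image_empty, Finset.card_empty]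
  have hdQ : (d : ℚ) ≠ 0 := by exact_mod_cast hd0.ne'
  have hlQ : (ℓ : ℚ) ≠ 0 := by exact_mod_cast hl0.ne'
  have hcast : ((d / ℓ : ℕ) : ℚ) = (d : ℚ) / (ℓ : ℚ) := Nat.cast_div hl hlQ
  rcases eq_or_ne q 0 with rfl | hqne
  · rw [if_pos rfl, claim4, hq0 rfl]
    norm_num
  · rw [if_neg hqne, claim4, hcast]
    have key : ∀ x : ℚ, (ℓ : ℚ) / d * (x * (d / ℓ)) = x := fun x => by field_simp
    linarith [key (Of.card : ℚ)]
end

section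
/- Let m ≥ 3 and let I be a nonempty proper subset of ZMod m that is connected in the cycle graph C_m. Then for every nontrivial rotation φ ∈ ⟨σ_1⟩ (i.e., φ = σ_k with k not divisible by m), one has φ·I ≠ I. -/
open Pointwise

lemma rot_zpow_apply (m : ℕ) (k : ℤ) (x : ZMod m) :
    ((rot m) ^ k) x = x + (k : ZMod m) := by
  induction k using Int.induction_on generalizing x with
  | zero => simp
  | succ n ih =>
      rw [zpow_add_one, Equiv.Perm.mul_apply, ih]
      simp only [rot, Equiv.coe_addRight]
      push_cast; ring
  | pred n ih =>
      rw [zpow_sub_one, Equiv.Perm.mul_apply, ih]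
      simp only [rot, Equiv.Perm.inv_def, Equiv.addRight_symm, Equiv.coe_addRight]
      push_cast; ring

lemma walk_prop (m : ℕ) (I : Set (ZMod m)) (a : ZMod m) (ha : a ∈ I) (ha' : a - 1 ∉ I) :
    ∀ (v u : ↥I) (_ : ((cycleGraph m).induce I).Walk v u),
      (∃ j : ℕ, (u : ZMod m) = a + j ∧ ∀ i ≤ j, a + (i : ZMod m) ∈ I) →
      (∃ j : ℕ, (v : ZMod m) = a + j ∧ ∀ i ≤ j, a + (i : ZMod m) ∈ I) := by
  intro v u w
  induction w with
  | nil => exact id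
  | @cons v' w' u' hadj p ih =>
      intro hu
      obtain ⟨j, hj, hall⟩ := ih hu
      have hA : (v' : ZMod m) ≠ w' ∧ ((w' : ZMod m) = v' + 1 ∨ (v' : ZMod m) = w' + 1) := by simpa [cycleGraph] using hadj
      rcases hA.2 with h1 | h1
      · -- w' = v' + 1, so v' = w' - 1
        rcases j with _ | n
        · exfalso
          apply ha'
          have hv : (v' : ZMod m) = a - 1 := by
            push_cast at hj; linear_combination hj - h1
          rw [← hv]; exact v'.2
        · refine ⟨n, ?_, fun i hi => hall i (hi.trans (Nat.le_succ n))⟩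
          push_cast at hj ⊢; linear_combination hj - h1
      · -- v' = w' + 1
        refine ⟨j + 1, ?_, ?_⟩
        · push_cast at hj ⊢; linear_combination hj + h1
        · intro i hi
          rcases Nat.lt_or_ge i (j + 1) with hlt | hge
          · exact hall i (Nat.lt_succ_iff.mp hlt)
          · have hij : i = j + 1 := le_antisymm hi hge
            subst hij
            have heq : a + ((j + 1 : ℕ) : ZMod m) = (v' : ZMod m) := by
              push_cast; linear_combination -hj - h1
            rw [heq]; exact v'.2

lemma boundary_unique (m : ℕ) (I : Set (ZMod m)) (hconn : IsConnSubset m I)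
    (a b : ZMod m) (ha : a ∈ I) (ha' : a - 1 ∉ I) (hb : b ∈ I) (hb' : b - 1 ∉ I) :
    b = a := by
  obtain ⟨w⟩ := hconn.preconnected ⟨b, hb⟩ ⟨a, ha⟩
  obtain ⟨j, hj, hall⟩ := walk_prop m I a ha ha' ⟨b, hb⟩ ⟨a, ha⟩ w
    ⟨0, by show a = a + ((0 : ℕ) : ZMod m); simp, by
      intro i hi; interval_cases i; simpa using ha⟩
  have hj' : b = a + ((j : ℕ) : ZMod m) := hj
  rcases j with _ | n
  · simpa using hj'
  · exfalso
    apply hb'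
    have : b - 1 = a + (n : ZMod m) := by push_cast at hj'; linear_combination hj'
    rw [this]; exact hall n (Nat.le_succ n)

lemma exists_boundary (m : ℕ) [NeZero m] (I : Set (ZMod m))
    (hne : I.Nonempty) (hproper : I ≠ Set.univ) :
    ∃ a ∈ I, a - 1 ∉ I := by
  obtain ⟨x, hx⟩ := hne
  obtain ⟨y, hy⟩ := Set.ne_univ_iff_exists_notMem I |>.mp hproper
  have hex : ∃ n : ℕ, y + (n : ZMod m) ∈ I := by
    refine ⟨(x - y).val, ?_⟩
    rw [ZMod.natCast_val, ZMod.cast_id]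
    simpa using hx
  classical
  set n₀ := Nat.find hex with hn₀
  have hmem : y + (n₀ : ZMod m) ∈ I := Nat.find_spec hex
  have hpos : 0 < n₀ := by
    rcases Nat.eq_zero_or_pos n₀ with h | h
    · exfalso; apply hy; have := hmem; rw [h] at this; simpa using this
    · exact h
  refine ⟨y + (n₀ : ZMod m), hmem, ?_⟩
  have heq : y + (n₀ : ZMod m) - 1 = y + ((n₀ - 1 : ℕ) : ZMod m) := by
    rw [Nat.cast_sub hpos]; push_cast; ring
  rw [heq]
  exact Nat.find_min hex (Nat.sub_lt hpos one_pos)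

theorem rotation_moves_connected_set (m : ℕ) (hm : 3 ≤ m) (I : Set (ZMod m))
    (hne : I.Nonempty) (hproper : I ≠ Set.univ) (hconn : IsConnSubset m I)
    (k : ℤ) (hk : ¬ (m : ℤ) ∣ k) :
    ((rot m) ^ k) • I ≠ I := by
  haveI : NeZero m := ⟨by omega⟩
  intro h
  have hc : (k : ZMod m) ≠ 0 := fun h0 => hk ((ZMod.intCast_zmod_eq_zero_iff_dvd k m).mp h0)
  obtain ⟨a, ha, ha'⟩ := exists_boundary m I hne hproper
  set c : ZMod m := (k : ZMod m) with hcdef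
  have hmem : a + c ∈ I := by
    have h2 : ((rot m) ^ k) a ∈ ((rot m) ^ k) • I := Set.smul_mem_smul_set ha
    rw [h] at h2
    rwa [rot_zpow_apply] at h2
  have hmem' : a + c - 1 ∉ I := by
    intro hin
    apply ha'
    have h3 : ((rot m) ^ k) (a - 1) ∈ I := by
      rw [rot_zpow_apply]
      have h4 : a - 1 + (k : ZMod m) = a + c - 1 := by rw [hcdef]; ring
      rwa [h4]
    rw [← h] at h3
    exact Set.smul_mem_smul_set_iff.mp h3
  have hba := boundary_unique m I hconn a (a + c) ha ha' hmem hmem'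
  apply hc
  have h5 : a + c = a + 0 := by rw [hba]; ring
  exact add_left_cancel h5
end
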